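/- arXiv:2409.06027 — 4 statements merged into one kernel-verified Lean document; each statement's English description precedes it below -/
import Mathlib

section
/- Let P be a group, N a normal subgroup of P and M a subgroup of P such that N ∩ M = {1} and P = N·M (every element of P is a product of an element of N and an element of M). Suppose P acts on a set X, and let x ∈ X be a point whose P-orbit is finite. Set P_x = Stab_P(x), N_x = Stab_N(x) = N ∩ P_x, and M(x) = { m ∈ M : n·m ∈ P_x for some n ∈ N } (the image of P_x under the projection P → M determined by the decomposition P = N⋊M; it is a subgroup of M). Then all three indices below are finite and [P : P_x] = [N : N_x] · [M : M(x)]. -/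
/-- If every element of `U` is (element of `T`) · (element of `S`), with `T ≤ U`, `S ≤ U`,
then the coset space `U/S` is in bijection with `T/(S ∩ T)`. -/
lemma aux_relindex_eq {G : Type*} [Group G] (S T U : Subgroup G)
    (hTU : T ≤ U) (h : ∀ u ∈ U, ∃ t ∈ T, t⁻¹ * u ∈ S) :
    S.relIndex U = S.relIndex T := by
  have key : Function.Bijective
      (Quotient.map' (Subgroup.inclusion hTU)
        (fun a b hab => by
          rw [QuotientGroup.leftRel_apply] at hab ⊢
          simpa [Subgroup.mem_subgroupOf] using hab) :
        T ⧸ S.subgroupOf T → U ⧸ S.subgroupOf U) := by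
    constructor
    · intro a b hab
      induction a using Quotient.inductionOn'
      induction b using Quotient.inductionOn'
      rw [Quotient.map'_mk'', Quotient.map'_mk'', Quotient.eq''] at hab
      rw [Quotient.eq'']
      rw [QuotientGroup.leftRel_apply] at hab ⊢
      simpa [Subgroup.mem_subgroupOf] using hab
    · intro q
      induction q using Quotient.inductionOn' with
      | h u =>
        obtain ⟨t, htT, hts⟩ := h u.1 u.2
        refine ⟨Quotient.mk'' ⟨t, htT⟩, ?_⟩
        rw [Quotient.map'_mk'', Quotient.eq'', QuotientGroup.leftRel_apply]
        simpa [Subgroup.mem_subgroupOf] using hts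
  unfold Subgroup.relIndex Subgroup.index
  exact (Nat.card_congr (Equiv.ofBijective _ key)).symm

/-- Let `P` be a group, `N` a normal subgroup and `M` a subgroup with
`N ∩ M = {1}` and `P = N·M`.  Suppose `P` acts on `X` and `x ∈ X` has finite `P`-orbit.
Let `P_x` be the stabilizer of `x` in `P`, `N_x = N ∩ P_x`, and let `M(x)` be the subgroup
of `M` consisting of those `m ∈ M` such that `n·m ∈ P_x` for some `n ∈ N`.
Then all three indices are finite and `[P : P_x] = [N : N_x] · [M : M(x)]`. -/
theorem stmt_0 {P : Type*} [Group P] (N M : Subgroup P) [N.Normal]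
    (hNM : N ⊓ M = ⊥) (hP : ∀ g : P, ∃ n ∈ N, ∃ m ∈ M, g = n * m)
    {X : Type*} [MulAction P X] (x : X) (hx : (MulAction.orbit P x).Finite) :
    ∃ Mx : Subgroup P,
      (Mx : Set P) = {m : P | m ∈ M ∧ ∃ n ∈ N, n * m ∈ MulAction.stabilizer P x} ∧
      (MulAction.stabilizer P x).index ≠ 0 ∧
      (MulAction.stabilizer P x).relIndex N ≠ 0 ∧
      Mx.relIndex M ≠ 0 ∧
      (MulAction.stabilizer P x).index =
        (MulAction.stabilizer P x).relIndex N * Mx.relIndex M := by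
  set S := MulAction.stabilizer P x with hS
  set K := N ⊔ S with hK
  refine ⟨K ⊓ M, ?_, ?_⟩
  · ext g
    simp only [Subgroup.coe_inf, Set.mem_inter_iff, SetLike.mem_coe, Set.mem_setOf_eq]
    constructor
    · rintro ⟨hgK, hgM⟩
      refine ⟨hgM, ?_⟩
      rw [hK, ← SetLike.mem_coe, Subgroup.normal_mul] at hgK
      obtain ⟨n, hn, s, hs, rfl⟩ := hgK
      exact ⟨n⁻¹, N.inv_mem hn, by simpa using hs⟩
    · rintro ⟨hgM, n, hn, hns⟩
      refine ⟨?_, hgM⟩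
      have : g = n⁻¹ * (n * g) := by group
      rw [hK, ← SetLike.mem_coe, Subgroup.normal_mul]
      exact ⟨n⁻¹, N.inv_mem hn, n * g, hns, this.symm⟩
  · have hSK : S ≤ K := le_sup_right
    have eq1 : S.relIndex K * K.index = S.index := Subgroup.relIndex_mul_index hSK
    have eq2 : S.relIndex K = S.relIndex N := by
      apply aux_relindex_eq S N K le_sup_left
      intro u hu
      rw [hK, ← SetLike.mem_coe, Subgroup.normal_mul] at hu
      obtain ⟨n, hn, s, hs, rfl⟩ := hu
      exact ⟨n, hn, by simpa using hs⟩
    have eq3 : K.index = K.relIndex M := by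
      rw [← Subgroup.relIndex_top_right]
      apply aux_relindex_eq K M ⊤ le_top
      intro g _
      obtain ⟨n, hn, m, hm, rfl⟩ := hP g
      refine ⟨m, hm, ?_⟩
      have h2 : m⁻¹ * (n * m) ∈ N := by
        rw [← mul_assoc]
        exact Subgroup.Normal.conj_mem' ‹N.Normal› n hn m
      exact Subgroup.mem_sup_left h2
    have eq4 : K.relIndex M = (K ⊓ M).relIndex M := (Subgroup.inf_relIndex_right K M).symm
    have hmain : S.index = S.relIndex N * (K ⊓ M).relIndex M := by
      rw [← eq1, eq2, eq3, eq4]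
    have hfin : S.index ≠ 0 := by
      rw [MulAction.index_stabilizer]
      have hne : (MulAction.orbit P x).Nonempty := ⟨x, MulAction.mem_orbit_self x⟩
      exact ((Set.ncard_pos hx).mpr hne).ne'
    refine ⟨hfin, ?_, ?_, hmain⟩
    · intro h0; rw [hmain, h0, zero_mul] at hfin; exact hfin rfl
    · intro h0; rw [hmain, h0, mul_zero] at hfin; exact hfin rfl
end

section
/- Let p be a prime and let H be a subgroup of GL₄(ℤ_p) such that every g ∈ H satisfies g₃₁ ∈ pℤ_p and g₃₂·g₄₁ ∈ pℤ_p (in 2×2 block notation g = [[A,B],[C,D]], this says C₁₁ ∈ pℤ_p and C₁₂·C₂₁ ∈ pℤ_p). Then at least one of the following three alternatives holds: (a) for all g ∈ H, the entries g₂₁, g₃₁, g₄₁ lie in pℤ_p; or (b) for all g ∈ H, the entries g₃₁, g₃₂, g₃₄ lie in pℤ_p; or (c) for all g ∈ H, the entries g₃₁, g₃₂, g₄₁, g₄₂ lie in pℤ_p. -/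
open scoped MatrixGroups


section Key

variable {F : Type*} [Field F]

private lemma mulent (a b : Matrix (Fin 4) (Fin 4) F) (i j : Fin 4) :
    (a * b) i j = a i 0 * b 0 j + a i 1 * b 1 j + a i 2 * b 2 j + a i 3 * b 3 j := by
  rw [Matrix.mul_apply, Fin.sum_univ_four]

theorem key_lemma (S : Set (Matrix (Fin 4) (Fin 4) F))
    (hmul : ∀ a ∈ S, ∀ b ∈ S, a * b ∈ S)
    (hinv : ∀ a ∈ S, ∃ b, b * a = 1 ∧ a * b = 1)
    (h20 : ∀ g ∈ S, g 2 0 = 0)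
    (hq : ∀ g ∈ S, g 2 1 * g 3 0 = 0) :
    (∀ g ∈ S, g 1 0 = 0 ∧ g 3 0 = 0) ∨
    (∀ g ∈ S, g 2 1 = 0 ∧ g 2 3 = 0) ∨
    (∀ g ∈ S, g 2 1 = 0 ∧ g 3 0 = 0 ∧ g 3 1 = 0) := by
  classical
  have pair : ∀ g ∈ S, ∀ h ∈ S, g 2 1 * h 1 0 + g 2 3 * h 3 0 = 0 := by
    intro g hg h hh
    have h1 := h20 _ (hmul g hg h hh)
    rw [mulent] at h1
    rw [h20 g hg, h20 h hh] at h1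
    linear_combination h1
  by_cases hB : ∀ g ∈ S, g 1 0 = 0 ∧ g 3 0 = 0
  · exact Or.inl hB
  by_cases hA : ∀ g ∈ S, g 2 1 = 0 ∧ g 2 3 = 0
  · exact Or.inr (Or.inl hA)
  right; right
  push_neg at hA hB
  obtain ⟨a, haS, ha2⟩ := hA
  obtain ⟨b, hbS, hb2⟩ := hB
  have all30 : ∀ g ∈ S, g 3 0 = 0 := by
    by_contra hcon
    push_neg at hcon
    obtain ⟨h, hhS, h30⟩ := hcon
    have h21 : h 2 1 = 0 := (mul_eq_zero.1 (hq h hhS)).resolve_right h30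
    set c : F := h 1 0 / h 3 0 with hc_def
    have hch : h 1 0 = c * h 3 0 := by rw [hc_def, div_mul_cancel₀ _ h30]
    have rel23 : ∀ g ∈ S, g 2 3 = -(c * g 2 1) := by
      intro g hg
      have hp := pair g hg h hhS
      rw [hch] at hp
      have hz : (g 2 3 + c * g 2 1) * h 3 0 = 0 := by linear_combination hp
      have := (mul_eq_zero.1 hz).resolve_right h30
      linear_combination this
    have ha21 : a 2 1 ≠ 0 := by
      intro h0
      exact ha2 h0 (by rw [rel23 a haS, h0]; ring)
    have ha30 : a 3 0 = 0 := (mul_eq_zero.1 (hq a haS)).resolve_left ha21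
    have rel10 : ∀ g ∈ S, g 1 0 = c * g 3 0 := by
      intro g hg
      have hp := pair a haS g hg
      rw [rel23 a haS] at hp
      have hz : a 2 1 * (g 1 0 - c * g 3 0) = 0 := by linear_combination hp
      have := (mul_eq_zero.1 hz).resolve_left ha21
      linear_combination this
    have ha10 : a 1 0 = 0 := by rw [rel10 a haS, ha30, mul_zero]
    have relA : ∀ g ∈ S, c * g 1 1 + g 1 3 = c * c * g 3 1 + c * g 3 3 := by
      intro g hg
      have e1 := rel10 _ (hmul g hg h hhS)
      rw [mulent g h 1 0, mulent g h 3 0] at e1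
      rw [rel10 g hg, hch, h20 h hhS] at e1
      have hz : (c * g 1 1 + g 1 3 - (c * c * g 3 1 + c * g 3 3)) * h 3 0 = 0 := by
        linear_combination e1
      have := (mul_eq_zero.1 hz).resolve_right h30
      linear_combination this
    -- inverse of a
    obtain ⟨a', ha'l, _⟩ := hinv a haS
    have ea0 : ∀ i : Fin 4, a' i 0 * a 0 0 = (1 : Matrix (Fin 4) (Fin 4) F) i 0 := by
      intro i
      have hh1 := congrFun (congrFun ha'l i) 0
      rw [mulent] at hh1
      rw [ha10, h20 a haS, ha30] at hh1
      linear_combination hh1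
    have ha00 : a 0 0 ≠ 0 := by
      intro h0
      have := ea0 0
      rw [h0, mul_zero, Matrix.one_apply_eq] at this
      exact zero_ne_one this
    have ha'30 : a' 3 0 = 0 := by
      have := ea0 3
      rw [Matrix.one_apply_ne (by decide)] at this
      exact (mul_eq_zero.1 this).resolve_right ha00
    have hdel : c * a 3 1 + a 3 3 ≠ 0 := by
      intro h0
      have e1 := congrFun (congrFun ha'l 3) 1
      have e3 := congrFun (congrFun ha'l 3) 3
      rw [mulent] at e1
      rw [mulent] at e3
      rw [Matrix.one_apply_ne (by decide)] at e1
      rw [Matrix.one_apply_eq] at e3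
      have hA1 : c * a 1 1 + a 1 3 = 0 := by linear_combination relA a haS + c * h0
      have ha23 : a 2 3 = -(c * a 2 1) := rel23 a haS
      exact (zero_ne_one : (0:F) ≠ 1) (by
        linear_combination c * e1 + e3 - (c * a 0 1 + a 0 3) * ha'30 - a' 3 1 * hA1
          - a' 3 2 * ha23 - a' 3 3 * h0)
    -- inverse of h
    obtain ⟨h', _, hh'r⟩ := hinv h hhS
    have h23 : h 2 3 = 0 := by rw [rel23 h hhS, h21]; ring
    have erow2 : ∀ j : Fin 4, h 2 2 * h' 2 j = (1 : Matrix (Fin 4) (Fin 4) F) 2 j := by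
      intro j
      have hh1 := congrFun (congrFun hh'r 2) j
      rw [mulent] at hh1
      rw [h20 h hhS, h21, h23] at hh1
      linear_combination hh1
    have hh22 : h 2 2 ≠ 0 := by
      intro h0
      have := erow2 2
      rw [h0, zero_mul, Matrix.one_apply_eq] at this
      exact zero_ne_one this
    have hh'21 : h' 2 1 = 0 := by
      have := erow2 1
      rw [Matrix.one_apply_ne (by decide)] at this
      exact (mul_eq_zero.1 this).resolve_left hh22
    have hrho : h 1 1 - c * h 3 1 ≠ 0 := by
      intro h0
      have e1 := congrFun (congrFun hh'r 1) 1
      have e3 := congrFun (congrFun hh'r 3) 1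
      rw [mulent] at e1
      rw [mulent] at e3
      rw [Matrix.one_apply_eq] at e1
      rw [Matrix.one_apply_ne (by decide)] at e3
      have hch' := rel10 h hhS
      have hA13 : h 1 3 - c * h 3 3 = 0 := by linear_combination relA h hhS - c * h0
      exact (zero_ne_one : (0:F) ≠ 1) (by
        linear_combination e1 - c * e3 - h' 0 1 * hch' - h' 1 1 * h0
          - (h 1 2 - c * h 3 2) * hh'21 - h' 3 1 * hA13)
    -- final contradiction
    have hahS := hmul a haS h hhS
    have hz := hq _ hahS
    rw [mulent a h 2 1, mulent a h 3 0] at hz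
    rw [h20 a haS, h21, rel23 a haS, ha30, hch, h20 h hhS] at hz
    have hz2 : (a 2 1 * (h 1 1 - c * h 3 1)) * (h 3 0 * (c * a 3 1 + a 3 3)) = 0 := by
      linear_combination hz
    exact (mul_ne_zero (mul_ne_zero ha21 hrho) (mul_ne_zero h30 hdel)) hz2
  -- now all g 3 0 = 0
  have hb10 : b 1 0 ≠ 0 := fun h0 => hb2 h0 (all30 b hbS)
  intro g hg
  have hg30 := all30 g hg
  have hg21 : g 2 1 = 0 := by
    have hp := pair g hg b hbS
    rw [all30 b hbS] at hp
    have hz : g 2 1 * b 1 0 = 0 := by linear_combination hp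
    exact (mul_eq_zero.1 hz).resolve_right hb10
  have hg31 : g 3 1 = 0 := by
    have hz := all30 _ (hmul g hg b hbS)
    rw [mulent] at hz
    rw [hg30, h20 b hbS, all30 b hbS] at hz
    have hz2 : g 3 1 * b 1 0 = 0 := by linear_combination hz
    exact (mul_eq_zero.1 hz2).resolve_right hb10
  exact ⟨hg21, hg30, hg31⟩

end Key

open scoped MatrixGroups

private lemma pdvd_iff {p : ℕ} [Fact p.Prime] (x : ℤ_[p]) :
    (p : ℤ_[p]) ∣ x ↔ PadicInt.toZMod x = 0 := by
  rw [← Ideal.mem_span_singleton, ← PadicInt.maximalIdeal_eq_span_p,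
    ← PadicInt.ker_toZMod, RingHom.mem_ker]


/-- Let `p` be a prime and `H ≤ GL₄(ℤ_p)` a subgroup such that every
`g ∈ H` satisfies `g₃₁ ∈ pℤ_p` and `g₃₂·g₄₁ ∈ pℤ_p`.  Then at least one of:
(a) for all `g ∈ H`, `g₂₁, g₃₁, g₄₁ ∈ pℤ_p`; or
(b) for all `g ∈ H`, `g₃₁, g₃₂, g₃₄ ∈ pℤ_p`; or
(c) for all `g ∈ H`, `g₃₁, g₃₂, g₄₁, g₄₂ ∈ pℤ_p`.
(Indices are 1-based in the informal statement; here `(i,j)` is entry `g (i-1) (j-1)`.) -/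
theorem stmt_2 (p : ℕ) [Fact p.Prime] (H : Subgroup (GL (Fin 4) ℤ_[p]))
    (hH : ∀ g ∈ H, (p : ℤ_[p]) ∣ (g : Matrix (Fin 4) (Fin 4) ℤ_[p]) 2 0 ∧
      (p : ℤ_[p]) ∣ ((g : Matrix (Fin 4) (Fin 4) ℤ_[p]) 2 1 *
        (g : Matrix (Fin 4) (Fin 4) ℤ_[p]) 3 0)) :
    (∀ g ∈ H, (p : ℤ_[p]) ∣ (g : Matrix (Fin 4) (Fin 4) ℤ_[p]) 1 0 ∧
        (p : ℤ_[p]) ∣ (g : Matrix (Fin 4) (Fin 4) ℤ_[p]) 2 0 ∧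
        (p : ℤ_[p]) ∣ (g : Matrix (Fin 4) (Fin 4) ℤ_[p]) 3 0) ∨
    (∀ g ∈ H, (p : ℤ_[p]) ∣ (g : Matrix (Fin 4) (Fin 4) ℤ_[p]) 2 0 ∧
        (p : ℤ_[p]) ∣ (g : Matrix (Fin 4) (Fin 4) ℤ_[p]) 2 1 ∧
        (p : ℤ_[p]) ∣ (g : Matrix (Fin 4) (Fin 4) ℤ_[p]) 2 3) ∨
    (∀ g ∈ H, (p : ℤ_[p]) ∣ (g : Matrix (Fin 4) (Fin 4) ℤ_[p]) 2 0 ∧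
        (p : ℤ_[p]) ∣ (g : Matrix (Fin 4) (Fin 4) ℤ_[p]) 2 1 ∧
        (p : ℤ_[p]) ∣ (g : Matrix (Fin 4) (Fin 4) ℤ_[p]) 3 0 ∧
        (p : ℤ_[p]) ∣ (g : Matrix (Fin 4) (Fin 4) ℤ_[p]) 3 1) := by
  classical
  set r : ℤ_[p] →+* ZMod p := @PadicInt.toZMod p _ with hr
  set S : Set (Matrix (Fin 4) (Fin 4) (ZMod p)) :=
    (fun g : GL (Fin 4) ℤ_[p] => (g : Matrix (Fin 4) (Fin 4) ℤ_[p]).map r) '' (H : Set _) with hS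
  have hmem : ∀ g ∈ H, ((g : Matrix (Fin 4) (Fin 4) ℤ_[p]).map r) ∈ S :=
    fun g hg => ⟨g, hg, rfl⟩
  have hmul : ∀ a ∈ S, ∀ b ∈ S, a * b ∈ S := by
    rintro _ ⟨g, hg, rfl⟩ _ ⟨g', hg', rfl⟩
    exact ⟨g * g', mul_mem hg hg', by simp only; rw [Units.val_mul, Matrix.map_mul]⟩
  have hinv : ∀ a ∈ S, ∃ b, b * a = 1 ∧ a * b = 1 := by
    rintro _ ⟨g, hg, rfl⟩
    simp only
    refine ⟨((g⁻¹ : GL (Fin 4) ℤ_[p]) : Matrix (Fin 4) (Fin 4) ℤ_[p]).map r, ?_, ?_⟩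
    · rw [← Matrix.map_mul, ← Units.val_mul, inv_mul_cancel, Units.val_one,
        Matrix.map_one r (map_zero r) (map_one r)]
    · rw [← Matrix.map_mul, ← Units.val_mul, mul_inv_cancel, Units.val_one,
        Matrix.map_one r (map_zero r) (map_one r)]
  have h20 : ∀ m ∈ S, m 2 0 = 0 := by
    rintro _ ⟨g, hg, rfl⟩
    exact (pdvd_iff _).1 (hH g hg).1
  have hq : ∀ m ∈ S, m 2 1 * m 3 0 = 0 := by
    rintro _ ⟨g, hg, rfl⟩
    have := (pdvd_iff _).1 (hH g hg).2
    rw [map_mul] at this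
    exact this
  rcases key_lemma S hmul hinv h20 hq with h | h | h
  · left
    intro g hg
    obtain ⟨h1, h3⟩ := h _ (hmem g hg)
    exact ⟨(pdvd_iff _).2 h1, (hH g hg).1, (pdvd_iff _).2 h3⟩
  · right; left
    intro g hg
    obtain ⟨h1, h3⟩ := h _ (hmem g hg)
    exact ⟨(hH g hg).1, (pdvd_iff _).2 h1, (pdvd_iff _).2 h3⟩
  · right; right
    intro g hg
    obtain ⟨h1, h3, h4⟩ := h _ (hmem g hg)
    exact ⟨(hH g hg).1, (pdvd_iff _).2 h1, (pdvd_iff _).2 h3, (pdvd_iff _).2 h4⟩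
end

section
/- Let p be a prime. Let 𝒦_p = { g ∈ GSp₄(ℚ_p) : g₁₃ ∈ p⁻¹ℤ_p; g₂₁, g₃₁, g₃₂, g₃₄, g₄₁ ∈ pℤ_p; and all remaining entries of g lie in ℤ_p } (the first paramodular subgroup), and let 𝒩(𝒦_p) = { n ∈ GSp₄(ℚ_p) : n·𝒦_p·n⁻¹ = 𝒦_p } be its normalizer in GSp₄(ℚ_p). Let B(ℚ_p) = { g ∈ GSp₄(ℚ_p) : g₂₁ = g₃₁ = g₄₁ = g₃₂ = g₄₂ = g₃₄ = 0 } be the Borel subgroup. Then GSp₄(ℚ_p) = B(ℚ_p)·𝒩(𝒦_p), i.e. every g ∈ GSp₄(ℚ_p) can be written as g = b·n with b ∈ B(ℚ_p) and n ∈ 𝒩(𝒦_p). -/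
open Matrix

/-- The standard symplectic similitude matrix `J`. -/
noncomputable def J4 (p : ℕ) [Fact p.Prime] : Matrix (Fin 4) (Fin 4) ℚ_[p] :=
  !![0, 0, 1, 0; 0, 0, 0, 1; -1, 0, 0, 0; 0, -1, 0, 0]

/-- `GSp₄(ℚ_p)`: invertible 4×4 matrices `g` with `gᵀ·J·g = μ·J` for some `μ ≠ 0`. -/
def GSp4 (p : ℕ) [Fact p.Prime] : Set (Matrix (Fin 4) (Fin 4) ℚ_[p]) :=
  {g | g.det ≠ 0 ∧ ∃ μ : ℚ_[p], μ ≠ 0 ∧ gᵀ * J4 p * g = μ • J4 p}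

/-- The first paramodular subgroup `𝒦_p ⊂ GSp₄(ℚ_p)`:
`g₁₃ ∈ p⁻¹ℤ_p`; `g₂₁, g₃₁, g₃₂, g₃₄, g₄₁ ∈ pℤ_p`; all remaining entries in `ℤ_p`. -/
def Kpara (p : ℕ) [Fact p.Prime] : Set (Matrix (Fin 4) (Fin 4) ℚ_[p]) :=
  {g | g ∈ GSp4 p ∧
    ‖g 0 0‖ ≤ 1 ∧ ‖g 0 1‖ ≤ 1 ∧ ‖g 0 2‖ ≤ (p : ℝ) ∧ ‖g 0 3‖ ≤ 1 ∧
    ‖g 1 0‖ ≤ (p : ℝ)⁻¹ ∧ ‖g 1 1‖ ≤ 1 ∧ ‖g 1 2‖ ≤ 1 ∧ ‖g 1 3‖ ≤ 1 ∧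
    ‖g 2 0‖ ≤ (p : ℝ)⁻¹ ∧ ‖g 2 1‖ ≤ (p : ℝ)⁻¹ ∧ ‖g 2 2‖ ≤ 1 ∧ ‖g 2 3‖ ≤ (p : ℝ)⁻¹ ∧
    ‖g 3 0‖ ≤ (p : ℝ)⁻¹ ∧ ‖g 3 1‖ ≤ 1 ∧ ‖g 3 2‖ ≤ 1 ∧ ‖g 3 3‖ ≤ 1}

/-- The normalizer of `𝒦_p` in `GSp₄(ℚ_p)`. -/
noncomputable def KparaNormalizer (p : ℕ) [Fact p.Prime] :
    Set (Matrix (Fin 4) (Fin 4) ℚ_[p]) :=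
  {n | n ∈ GSp4 p ∧ (fun k => n * k * n⁻¹) '' Kpara p = Kpara p}

/-- The Borel subgroup `B(ℚ_p)` of `GSp₄(ℚ_p)`: entries at positions
(2,1), (3,1), (4,1), (3,2), (4,2), (3,4) vanish. -/
def BorelQp (p : ℕ) [Fact p.Prime] : Set (Matrix (Fin 4) (Fin 4) ℚ_[p]) :=
  {g | g ∈ GSp4 p ∧ g 1 0 = 0 ∧ g 2 0 = 0 ∧ g 3 0 = 0 ∧ g 2 1 = 0 ∧ g 3 1 = 0 ∧ g 2 3 = 0}

namespace Stmt3

set_option linter.unusedSectionVars false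

variable {p : ℕ} [Fact p.Prime]

/-! ### Elementary numeric facts -/

lemma pR_pos : (0:ℝ) < (p:ℝ) := by exact_mod_cast (Fact.out : p.Prime).pos
lemma pR_one_lt : (1:ℝ) < (p:ℝ) := by exact_mod_cast (Fact.out : p.Prime).one_lt
lemma pQ_ne : ((p:ℚ_[p])) ≠ 0 := by
  exact_mod_cast Nat.cast_ne_zero.mpr (Fact.out : p.Prime).ne_zero

noncomputable def pw (p : ℕ) (m : ℤ) : ℝ := (p:ℝ) ^ (-m)

lemma pw_pos (m : ℤ) : 0 < pw p m := zpow_pos pR_pos _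
lemma pw_nonneg (m : ℤ) : 0 ≤ pw p m := (pw_pos m).le
lemma pw_mono {m n : ℤ} (h : m ≤ n) : pw p n ≤ pw p m :=
  zpow_le_zpow_right₀ pR_one_lt.le (neg_le_neg h)
lemma pw_add (m n : ℤ) : pw p (m + n) = pw p m * pw p n := by
  rw [pw, pw, pw, neg_add, zpow_add₀ (ne_of_gt pR_pos)]

def Mw : Fin 4 → Fin 4 → ℤ := !![0,0,-1,0; 1,0,0,0; 1,1,0,1; 1,0,0,0]

def InP (p : ℕ) [Fact p.Prime] (x : Matrix (Fin 4) (Fin 4) ℚ_[p]) : Prop :=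
  ∀ i j, ‖x i j‖ ≤ pw p (Mw i j)

lemma nadd4 {a b c d : ℚ_[p]} {m : ℝ} (ha : ‖a‖ ≤ m) (hb : ‖b‖ ≤ m) (hc : ‖c‖ ≤ m)
    (hd : ‖d‖ ≤ m) : ‖a + b + c + d‖ ≤ m :=
  le_trans (Padic.nonarchimedean _ _) (max_le
    (le_trans (Padic.nonarchimedean _ _) (max_le
      (le_trans (Padic.nonarchimedean _ _) (max_le ha hb)) hc)) hd)

lemma nmul_le {a b : ℚ_[p]} {A B : ℝ} (ha : ‖a‖ ≤ A) (hb : ‖b‖ ≤ B) : ‖a * b‖ ≤ A * B := by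
  rw [norm_mul]
  exact mul_le_mul ha hb (norm_nonneg _) (le_trans (norm_nonneg _) ha)

lemma InP_mul {x y : Matrix (Fin 4) (Fin 4) ℚ_[p]} (hx : InP p x) (hy : InP p y) :
    InP p (x * y) := by
  intro i j
  have key : ∀ k, ‖x i k * y k j‖ ≤ pw p (Mw i j) := fun k =>
    le_trans (nmul_le (hx i k) (hy k j))
      (le_trans (le_of_eq (pw_add _ _).symm)
        (pw_mono (by revert i j k; decide)))
  rw [Matrix.mul_apply, Fin.sum_univ_four]
  exact nadd4 (key 0) (key 1) (key 2) (key 3)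

/-! ### Basic GSp4 lemmas -/

lemma JJ : J4 p * J4 p = -1 := by
  ext i j
  fin_cases i <;> fin_cases j <;>
    simp [J4, Matrix.mul_apply, Fin.sum_univ_four, Matrix.one_apply, vecHead, vecTail]

lemma GSp4_mul {x y : Matrix (Fin 4) (Fin 4) ℚ_[p]} (hx : x ∈ GSp4 p) (hy : y ∈ GSp4 p) :
    x * y ∈ GSp4 p := by
  obtain ⟨hdx, μ, hμ, hJx⟩ := hx
  obtain ⟨hdy, ν, hν, hJy⟩ := hy
  refine ⟨by simp [Matrix.det_mul, hdx, hdy], μ * ν, mul_ne_zero hμ hν, ?_⟩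
  have hJy' : yᵀ * (J4 p * y) = ν • J4 p := by rw [← Matrix.mul_assoc]; exact hJy
  calc (x * y)ᵀ * J4 p * (x * y)
      = yᵀ * ((xᵀ * J4 p * x) * y) := by
        rw [Matrix.transpose_mul]; simp only [Matrix.mul_assoc]
    _ = yᵀ * ((μ • J4 p) * y) := by rw [hJx]
    _ = μ • (yᵀ * (J4 p * y)) := by rw [Matrix.smul_mul, Matrix.mul_smul]
    _ = (μ * ν) • J4 p := by rw [hJy', smul_smul]

lemma left_inv_eq {x : Matrix (Fin 4) (Fin 4) ℚ_[p]} {μ : ℚ_[p]} (hμ : μ ≠ 0)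
    (hJx : xᵀ * J4 p * x = μ • J4 p) :
    (-μ⁻¹ • (J4 p * xᵀ * J4 p)) * x = 1 := by
  calc (-μ⁻¹ • (J4 p * xᵀ * J4 p)) * x
      = -μ⁻¹ • (J4 p * (xᵀ * J4 p * x)) := by
        rw [Matrix.smul_mul]; simp only [Matrix.mul_assoc]
    _ = -μ⁻¹ • (J4 p * (μ • J4 p)) := by rw [hJx]
    _ = (-μ⁻¹ * μ) • (J4 p * J4 p) := by rw [Matrix.mul_smul, smul_smul]
    _ = 1 := by
        rw [JJ, neg_mul, inv_mul_cancel₀ hμ, neg_smul, one_smul, neg_neg]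

lemma symp_row {x : Matrix (Fin 4) (Fin 4) ℚ_[p]} {μ : ℚ_[p]} (hμ : μ ≠ 0)
    (hJx : xᵀ * J4 p * x = μ • J4 p) : x * J4 p * xᵀ = μ • J4 p := by
  have h2 : x * (-μ⁻¹ • (J4 p * xᵀ * J4 p)) = 1 :=
    mul_eq_one_comm.mpr (left_inv_eq hμ hJx)
  have h3 : x * (J4 p * xᵀ * J4 p) = (-μ) • 1 := by
    have h := congrArg (HSMul.hSMul (-μ)) h2
    rwa [Matrix.mul_smul, smul_smul, mul_neg, neg_mul, neg_neg, mul_inv_cancel₀ hμ,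
      one_smul] at h
  have h4 := congrArg (fun M => M * J4 p) h3
  simp only [Matrix.smul_mul, Matrix.one_mul] at h4
  rw [show x * (J4 p * xᵀ * J4 p) * J4 p = x * J4 p * xᵀ * (J4 p * J4 p) by
        simp only [Matrix.mul_assoc], JJ] at h4
  rw [Matrix.mul_neg, Matrix.mul_one] at h4
  rw [neg_smul] at h4
  exact neg_injective h4

lemma GSp4_inv_mem {x : Matrix (Fin 4) (Fin 4) ℚ_[p]} (hx : x ∈ GSp4 p) : x⁻¹ ∈ GSp4 p := by
  obtain ⟨hd, μ, hμ, hJx⟩ := hx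
  have hu : IsUnit x.det := isUnit_iff_ne_zero.mpr hd
  have h1 : x * x⁻¹ = 1 := Matrix.mul_nonsing_inv _ hu
  refine ⟨?_, μ⁻¹, inv_ne_zero hμ, ?_⟩
  · rw [Matrix.det_nonsing_inv, Ring.inverse_eq_inv]
    exact inv_ne_zero hd
  · have key : (x⁻¹)ᵀ * (xᵀ * J4 p * x) * x⁻¹ = J4 p := by
      calc (x⁻¹)ᵀ * (xᵀ * J4 p * x) * x⁻¹
          = (x * x⁻¹)ᵀ * J4 p * (x * x⁻¹) := by
            rw [Matrix.transpose_mul]; simp only [Matrix.mul_assoc]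
        _ = J4 p := by rw [h1]; simp
    rw [hJx] at key
    rw [Matrix.mul_smul, Matrix.smul_mul] at key
    have key2 : μ • ((x⁻¹)ᵀ * J4 p * x⁻¹) = J4 p := key
    calc (x⁻¹)ᵀ * J4 p * x⁻¹
        = μ⁻¹ • (μ • ((x⁻¹)ᵀ * J4 p * x⁻¹)) := by
          rw [smul_smul, inv_mul_cancel₀ hμ, one_smul]
      _ = μ⁻¹ • J4 p := by rw [key2]

/-! ### Kpara vs InP -/

lemma InP_of_mem {x : Matrix (Fin 4) (Fin 4) ℚ_[p]} (hx : x ∈ Kpara p) : InP p x := by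
  obtain ⟨-, h1, h2, h3, h4, h5, h6, h7, h8, h9, h10, h11, h12, h13, h14, h15, h16⟩ := hx
  intro i j
  fin_cases i <;> fin_cases j
  exacts [by simpa [Mw, pw, vecHead, vecTail] using h1, by simpa [Mw, pw, vecHead, vecTail] using h2, by simpa [Mw, pw, vecHead, vecTail] using h3,
    by simpa [Mw, pw, vecHead, vecTail] using h4, by simpa [Mw, pw, vecHead, vecTail] using h5, by simpa [Mw, pw, vecHead, vecTail] using h6,
    by simpa [Mw, pw, vecHead, vecTail] using h7, by simpa [Mw, pw, vecHead, vecTail] using h8, by simpa [Mw, pw, vecHead, vecTail] using h9,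
    by simpa [Mw, pw, vecHead, vecTail] using h10, by simpa [Mw, pw, vecHead, vecTail] using h11, by simpa [Mw, pw, vecHead, vecTail] using h12,
    by simpa [Mw, pw, vecHead, vecTail] using h13, by simpa [Mw, pw, vecHead, vecTail] using h14, by simpa [Mw, pw, vecHead, vecTail] using h15,
    by simpa [Mw, pw, vecHead, vecTail] using h16]

lemma mem_Kpara_of {x : Matrix (Fin 4) (Fin 4) ℚ_[p]} (hx : x ∈ GSp4 p) (h : InP p x) :
    x ∈ Kpara p :=
  ⟨hx, by simpa [Mw, pw, vecHead, vecTail] using h 0 0, by simpa [Mw, pw, vecHead, vecTail] using h 0 1,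
    by simpa [Mw, pw, vecHead, vecTail] using h 0 2, by simpa [Mw, pw, vecHead, vecTail] using h 0 3,
    by simpa [Mw, pw, vecHead, vecTail] using h 1 0, by simpa [Mw, pw, vecHead, vecTail] using h 1 1,
    by simpa [Mw, pw, vecHead, vecTail] using h 1 2, by simpa [Mw, pw, vecHead, vecTail] using h 1 3,
    by simpa [Mw, pw, vecHead, vecTail] using h 2 0, by simpa [Mw, pw, vecHead, vecTail] using h 2 1,
    by simpa [Mw, pw, vecHead, vecTail] using h 2 2, by simpa [Mw, pw, vecHead, vecTail] using h 2 3,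
    by simpa [Mw, pw, vecHead, vecTail] using h 3 0, by simpa [Mw, pw, vecHead, vecTail] using h 3 1,
    by simpa [Mw, pw, vecHead, vecTail] using h 3 2, by simpa [Mw, pw, vecHead, vecTail] using h 3 3⟩

/-! ### Normalizer membership -/

lemma norm_mem {n m : Matrix (Fin 4) (Fin 4) ℚ_[p]} (hn : n ∈ GSp4 p)
    (hnm : n * m = 1) (hmn : m * n = 1)
    (h1 : ∀ k ∈ Kpara p, n * k * m ∈ Kpara p)
    (h2 : ∀ k ∈ Kpara p, m * k * n ∈ Kpara p) :
    n ∈ KparaNormalizer p := by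
  have hninv : n⁻¹ = m := Matrix.inv_eq_right_inv hnm
  refine ⟨hn, ?_⟩
  rw [hninv]
  apply Set.Subset.antisymm
  · rintro _ ⟨k, hk, rfl⟩; exact h1 k hk
  · intro k hk
    refine ⟨m * k * n, h2 k hk, ?_⟩
    calc n * (m * k * n) * m = (n * m) * (k * (n * m)) := by simp only [Matrix.mul_assoc]
      _ = k := by rw [hnm]; simp

lemma mem_N_of_InP {n m : Matrix (Fin 4) (Fin 4) ℚ_[p]} (hn : n ∈ GSp4 p) (hm : m ∈ GSp4 p)
    (hPn : InP p n) (hPm : InP p m) (hnm : n * m = 1) (hmn : m * n = 1) :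
    n ∈ KparaNormalizer p ∧ m ∈ KparaNormalizer p :=
  ⟨norm_mem hn hnm hmn
    (fun k hk => mem_Kpara_of (GSp4_mul (GSp4_mul hn hk.1) hm)
      (InP_mul (InP_mul hPn (InP_of_mem hk)) hPm))
    (fun k hk => mem_Kpara_of (GSp4_mul (GSp4_mul hm hk.1) hn)
      (InP_mul (InP_mul hPm (InP_of_mem hk)) hPn)),
   norm_mem hm hmn hnm
    (fun k hk => mem_Kpara_of (GSp4_mul (GSp4_mul hm hk.1) hn)
      (InP_mul (InP_mul hPm (InP_of_mem hk)) hPn))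
    (fun k hk => mem_Kpara_of (GSp4_mul (GSp4_mul hn hk.1) hm)
      (InP_mul (InP_mul hPn (InP_of_mem hk)) hPm))⟩

lemma N_mul {x y : Matrix (Fin 4) (Fin 4) ℚ_[p]} (hx : x ∈ KparaNormalizer p)
    (hy : y ∈ KparaNormalizer p) : x * y ∈ KparaNormalizer p := by
  refine ⟨GSp4_mul hx.1 hy.1, ?_⟩
  rw [Matrix.mul_inv_rev]
  have hcomp : (fun k => (x * y) * k * (y⁻¹ * x⁻¹))
      = (fun k => x * k * x⁻¹) ∘ (fun k => y * k * y⁻¹) := by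
    funext k; simp only [Function.comp_apply, Matrix.mul_assoc]
  rw [hcomp, Set.image_comp, hy.2, hx.2]

lemma one_mem_N : (1 : Matrix (Fin 4) (Fin 4) ℚ_[p]) ∈ KparaNormalizer p := by
  refine ⟨⟨by simp, 1, one_ne_zero, by simp⟩, ?_⟩
  have h1 : (1 : Matrix (Fin 4) (Fin 4) ℚ_[p])⁻¹ = 1 := Matrix.inv_eq_right_inv (by simp)
  rw [h1]
  have : (fun k : Matrix (Fin 4) (Fin 4) ℚ_[p] => 1 * k * 1) = id := by
    funext k; simp
  rw [this, Set.image_id]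


/-! ### Explicit elements -/

noncomputable def kA (p : ℕ) [Fact p.Prime] (t : ℚ_[p]) : Matrix (Fin 4) (Fin 4) ℚ_[p] :=
  !![1,0,0,0; t,1,0,0; 0,0,1,-t; 0,0,0,1]
noncomputable def kB (p : ℕ) [Fact p.Prime] (t : ℚ_[p]) : Matrix (Fin 4) (Fin 4) ℚ_[p] :=
  !![1,0,0,0; 0,1,0,0; 0,t,1,0; t,0,0,1]
noncomputable def kC (p : ℕ) [Fact p.Prime] (t : ℚ_[p]) : Matrix (Fin 4) (Fin 4) ℚ_[p] :=
  !![1,0,0,0; 0,1,0,0; t,0,1,0; 0,0,0,1]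
noncomputable def kD (p : ℕ) [Fact p.Prime] (t : ℚ_[p]) : Matrix (Fin 4) (Fin 4) ℚ_[p] :=
  !![1,0,0,0; 0,1,0,0; 0,0,1,0; 0,t,0,1]
noncomputable def rsw (p : ℕ) [Fact p.Prime] : Matrix (Fin 4) (Fin 4) ℚ_[p] :=
  !![0,0,((p:ℚ_[p]))⁻¹,0; 0,1,0,0; -(p:ℚ_[p]),0,0,0; 0,0,0,1]
noncomputable def rsw' (p : ℕ) [Fact p.Prime] : Matrix (Fin 4) (Fin 4) ℚ_[p] :=
  !![0,0,-((p:ℚ_[p]))⁻¹,0; 0,1,0,0; (p:ℚ_[p]),0,0,0; 0,0,0,1]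
noncomputable def s2 (p : ℕ) [Fact p.Prime] : Matrix (Fin 4) (Fin 4) ℚ_[p] :=
  !![1,0,0,0; 0,0,0,1; 0,0,1,0; 0,-1,0,0]
noncomputable def s2' (p : ℕ) [Fact p.Prime] : Matrix (Fin 4) (Fin 4) ℚ_[p] :=
  !![1,0,0,0; 0,0,0,-1; 0,0,1,0; 0,1,0,0]
noncomputable def u1 (p : ℕ) [Fact p.Prime] : Matrix (Fin 4) (Fin 4) ℚ_[p] :=
  !![0,1,0,0; (p:ℚ_[p]),0,0,0; 0,0,0,(p:ℚ_[p]); 0,0,1,0]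
noncomputable def u1' (p : ℕ) [Fact p.Prime] : Matrix (Fin 4) (Fin 4) ℚ_[p] :=
  !![0,((p:ℚ_[p]))⁻¹,0,0; 1,0,0,0; 0,0,0,1; 0,0,((p:ℚ_[p]))⁻¹,0]

lemma kA_inv (t : ℚ_[p]) : kA p t * kA p (-t) = 1 := by
  ext i j
  fin_cases i <;> fin_cases j <;>
    simp [kA, Matrix.mul_apply, Fin.sum_univ_four, Matrix.one_apply, vecHead, vecTail]

lemma kB_inv (t : ℚ_[p]) : kB p t * kB p (-t) = 1 := by
  ext i j
  fin_cases i <;> fin_cases j <;>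
    simp [kB, Matrix.mul_apply, Fin.sum_univ_four, Matrix.one_apply, vecHead, vecTail]

lemma kC_inv (t : ℚ_[p]) : kC p t * kC p (-t) = 1 := by
  ext i j
  fin_cases i <;> fin_cases j <;>
    simp [kC, Matrix.mul_apply, Fin.sum_univ_four, Matrix.one_apply, vecHead, vecTail]

lemma kD_inv (t : ℚ_[p]) : kD p t * kD p (-t) = 1 := by
  ext i j
  fin_cases i <;> fin_cases j <;>
    simp [kD, Matrix.mul_apply, Fin.sum_univ_four, Matrix.one_apply, vecHead, vecTail]

lemma rsw_inv : rsw p * rsw' p = 1 := by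
  ext i j
  fin_cases i <;> fin_cases j <;>
    simp [rsw, rsw', Matrix.mul_apply, Fin.sum_univ_four, Matrix.one_apply, vecHead, vecTail,
      mul_inv_cancel₀ (pQ_ne (p := p)), inv_mul_cancel₀ (pQ_ne (p := p))]

lemma rsw_inv' : rsw' p * rsw p = 1 := by
  ext i j
  fin_cases i <;> fin_cases j <;>
    simp [rsw, rsw', Matrix.mul_apply, Fin.sum_univ_four, Matrix.one_apply, vecHead, vecTail,
      mul_inv_cancel₀ (pQ_ne (p := p)), inv_mul_cancel₀ (pQ_ne (p := p))]

lemma s2_inv : s2 p * s2' p = 1 := by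
  ext i j
  fin_cases i <;> fin_cases j <;>
    simp [s2, s2', Matrix.mul_apply, Fin.sum_univ_four, Matrix.one_apply, vecHead, vecTail]

lemma s2_inv' : s2' p * s2 p = 1 := by
  ext i j
  fin_cases i <;> fin_cases j <;>
    simp [s2, s2', Matrix.mul_apply, Fin.sum_univ_four, Matrix.one_apply, vecHead, vecTail]

lemma u1_inv : u1 p * u1' p = 1 := by
  ext i j
  fin_cases i <;> fin_cases j <;>
    simp [u1, u1', Matrix.mul_apply, Fin.sum_univ_four, Matrix.one_apply, vecHead, vecTail,
      mul_inv_cancel₀ (pQ_ne (p := p)), inv_mul_cancel₀ (pQ_ne (p := p))]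

lemma u1_inv' : u1' p * u1 p = 1 := by
  ext i j
  fin_cases i <;> fin_cases j <;>
    simp [u1, u1', Matrix.mul_apply, Fin.sum_univ_four, Matrix.one_apply, vecHead, vecTail,
      mul_inv_cancel₀ (pQ_ne (p := p)), inv_mul_cancel₀ (pQ_ne (p := p))]

lemma kA_J (t : ℚ_[p]) : (kA p t)ᵀ * J4 p * kA p t = (1:ℚ_[p]) • J4 p := by
  rw [one_smul]; ext i j
  fin_cases i <;> fin_cases j <;>
    simp [kA, J4, Matrix.mul_apply, Fin.sum_univ_four, vecHead, vecTail] <;> ring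

lemma kB_J (t : ℚ_[p]) : (kB p t)ᵀ * J4 p * kB p t = (1:ℚ_[p]) • J4 p := by
  rw [one_smul]; ext i j
  fin_cases i <;> fin_cases j <;>
    simp [kB, J4, Matrix.mul_apply, Fin.sum_univ_four, vecHead, vecTail] <;> ring

lemma kC_J (t : ℚ_[p]) : (kC p t)ᵀ * J4 p * kC p t = (1:ℚ_[p]) • J4 p := by
  rw [one_smul]; ext i j
  fin_cases i <;> fin_cases j <;>
    simp [kC, J4, Matrix.mul_apply, Fin.sum_univ_four, vecHead, vecTail] <;> ring

lemma kD_J (t : ℚ_[p]) : (kD p t)ᵀ * J4 p * kD p t = (1:ℚ_[p]) • J4 p := by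
  rw [one_smul]; ext i j
  fin_cases i <;> fin_cases j <;>
    simp [kD, J4, Matrix.mul_apply, Fin.sum_univ_four, vecHead, vecTail] <;> ring

lemma rsw_J : (rsw p)ᵀ * J4 p * rsw p = (1:ℚ_[p]) • J4 p := by
  rw [one_smul]; ext i j
  fin_cases i <;> fin_cases j <;>
    simp [rsw, J4, Matrix.mul_apply, Fin.sum_univ_four, vecHead, vecTail,
      mul_inv_cancel₀ (pQ_ne (p := p)), inv_mul_cancel₀ (pQ_ne (p := p))]

lemma rsw'_J : (rsw' p)ᵀ * J4 p * rsw' p = (1:ℚ_[p]) • J4 p := by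
  rw [one_smul]; ext i j
  fin_cases i <;> fin_cases j <;>
    simp [rsw', J4, Matrix.mul_apply, Fin.sum_univ_four, vecHead, vecTail,
      mul_inv_cancel₀ (pQ_ne (p := p)), inv_mul_cancel₀ (pQ_ne (p := p))]

lemma s2_J : (s2 p)ᵀ * J4 p * s2 p = (1:ℚ_[p]) • J4 p := by
  rw [one_smul]; ext i j
  fin_cases i <;> fin_cases j <;>
    simp [s2, J4, Matrix.mul_apply, Fin.sum_univ_four, vecHead, vecTail]

lemma s2'_J : (s2' p)ᵀ * J4 p * s2' p = (1:ℚ_[p]) • J4 p := by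
  rw [one_smul]; ext i j
  fin_cases i <;> fin_cases j <;>
    simp [s2', J4, Matrix.mul_apply, Fin.sum_univ_four, vecHead, vecTail]

lemma u1_J : (u1 p)ᵀ * J4 p * u1 p = ((p:ℚ_[p])) • J4 p := by
  ext i j
  fin_cases i <;> fin_cases j <;>
    simp [u1, J4, Matrix.mul_apply, Fin.sum_univ_four, vecHead, vecTail, Matrix.smul_apply] <;>
    ring

lemma u1'_J : (u1' p)ᵀ * J4 p * u1' p = ((p:ℚ_[p]))⁻¹ • J4 p := by
  ext i j
  fin_cases i <;> fin_cases j <;>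
    simp [u1', J4, Matrix.mul_apply, Fin.sum_univ_four, vecHead, vecTail, Matrix.smul_apply,
      mul_inv_cancel₀ (pQ_ne (p := p)), inv_mul_cancel₀ (pQ_ne (p := p))] <;> ring

/-! ### norm helpers -/

lemma npinv : ‖((p:ℚ_[p]))⁻¹‖ = (p:ℝ) := by
  rw [norm_inv, Padic.norm_p, inv_inv]

lemma hA {a : ℚ_[p]} (h : ‖a‖ ≤ 1) : ‖a * (p:ℚ_[p])‖ ≤ (p:ℝ)⁻¹ := by
  rw [norm_mul, Padic.norm_p]
  calc ‖a‖ * (p:ℝ)⁻¹ ≤ 1 * (p:ℝ)⁻¹ := by gcongr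
    _ = (p:ℝ)⁻¹ := one_mul _

lemma hC {a : ℚ_[p]} (h : ‖a‖ ≤ (p:ℝ)) : ‖a * (p:ℚ_[p])‖ ≤ 1 := by
  rw [norm_mul, Padic.norm_p]
  calc ‖a‖ * (p:ℝ)⁻¹ ≤ (p:ℝ) * (p:ℝ)⁻¹ := by gcongr
    _ = 1 := mul_inv_cancel₀ (ne_of_gt pR_pos)

lemma hD {a : ℚ_[p]} (h : ‖a‖ ≤ (p:ℝ)⁻¹) : ‖a * ((p:ℚ_[p]))⁻¹‖ ≤ 1 := by
  rw [norm_mul, npinv]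
  calc ‖a‖ * (p:ℝ) ≤ (p:ℝ)⁻¹ * (p:ℝ) := by gcongr
    _ = 1 := inv_mul_cancel₀ (ne_of_gt pR_pos)

lemma hE {a : ℚ_[p]} (h : ‖a‖ ≤ 1) : ‖a * ((p:ℚ_[p]))⁻¹‖ ≤ (p:ℝ) := by
  rw [norm_mul, npinv]
  calc ‖a‖ * (p:ℝ) ≤ 1 * (p:ℝ) := by gcongr
    _ = (p:ℝ) := one_mul _

/-! ### InP for the explicit elements -/

lemma kA_InP {t : ℚ_[p]} (ht : ‖t‖ ≤ (p:ℝ)⁻¹) : InP p (kA p t) := by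
  intro i j
  fin_cases i <;> fin_cases j <;>
    simp [kA, Mw, pw, vecHead, vecTail] <;>
    first
      | exact ht
      | positivity

lemma kB_InP {t : ℚ_[p]} (ht : ‖t‖ ≤ (p:ℝ)⁻¹) : InP p (kB p t) := by
  intro i j
  fin_cases i <;> fin_cases j <;>
    simp [kB, Mw, pw, vecHead, vecTail] <;>
    first
      | exact ht
      | positivity

lemma kC_InP {t : ℚ_[p]} (ht : ‖t‖ ≤ (p:ℝ)⁻¹) : InP p (kC p t) := by
  intro i j
  fin_cases i <;> fin_cases j <;>
    simp [kC, Mw, pw, vecHead, vecTail] <;>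
    first
      | exact ht
      | positivity

lemma kD_InP {t : ℚ_[p]} (ht : ‖t‖ ≤ 1) : InP p (kD p t) := by
  intro i j
  fin_cases i <;> fin_cases j <;>
    simp [kD, Mw, pw, vecHead, vecTail] <;>
    first
      | exact ht
      | positivity

lemma rsw_InP : InP p (rsw p) := by
  intro i j
  fin_cases i <;> fin_cases j <;>
    simp [rsw, Mw, pw, vecHead, vecTail, Padic.norm_p, npinv] <;>
    positivity

lemma rsw'_InP : InP p (rsw' p) := by
  intro i j
  fin_cases i <;> fin_cases j <;>
    simp [rsw', Mw, pw, vecHead, vecTail, Padic.norm_p, npinv] <;>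
    positivity

lemma s2_InP : InP p (s2 p) := by
  intro i j
  fin_cases i <;> fin_cases j <;>
    simp [s2, Mw, pw, vecHead, vecTail] <;>
    positivity

lemma s2'_InP : InP p (s2' p) := by
  intro i j
  fin_cases i <;> fin_cases j <;>
    simp [s2', Mw, pw, vecHead, vecTail] <;>
    positivity

/-! ### Packaging: membership in the normalizer -/

lemma GSp4_of_J {x m : Matrix (Fin 4) (Fin 4) ℚ_[p]} {μ : ℚ_[p]} (hμ : μ ≠ 0)
    (hJ : xᵀ * J4 p * x = μ • J4 p) (hxm : x * m = 1) : x ∈ GSp4 p := by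
  refine ⟨?_, μ, hμ, hJ⟩
  have h := congrArg Matrix.det hxm
  rw [Matrix.det_mul, Matrix.det_one] at h
  exact left_ne_zero_of_mul_eq_one h

lemma pack {n m : Matrix (Fin 4) (Fin 4) ℚ_[p]} (hnGs : n ∈ GSp4 p) (hmGs : m ∈ GSp4 p)
    (hPn : InP p n) (hPm : InP p m) (hnm : n * m = 1) (hmn : m * n = 1) :
    n ∈ KparaNormalizer p ∧ n⁻¹ ∈ KparaNormalizer p ∧ n ∈ GSp4 p := by
  have h := mem_N_of_InP hnGs hmGs hPn hPm hnm hmn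
  exact ⟨h.1, by rw [Matrix.inv_eq_right_inv hnm]; exact h.2, hnGs⟩

lemma kA_pack {t : ℚ_[p]} (ht : ‖t‖ ≤ (p:ℝ)⁻¹) :
    kA p t ∈ KparaNormalizer p ∧ (kA p t)⁻¹ ∈ KparaNormalizer p ∧ kA p t ∈ GSp4 p :=
  pack (GSp4_of_J one_ne_zero (kA_J t) (kA_inv t))
    (GSp4_of_J one_ne_zero (kA_J (-t)) (by simpa using kA_inv (-t)))
    (kA_InP ht) (kA_InP (by simpa using ht)) (kA_inv t) (by simpa using kA_inv (-t))

lemma kB_pack {t : ℚ_[p]} (ht : ‖t‖ ≤ (p:ℝ)⁻¹) :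
    kB p t ∈ KparaNormalizer p ∧ (kB p t)⁻¹ ∈ KparaNormalizer p ∧ kB p t ∈ GSp4 p :=
  pack (GSp4_of_J one_ne_zero (kB_J t) (kB_inv t))
    (GSp4_of_J one_ne_zero (kB_J (-t)) (by simpa using kB_inv (-t)))
    (kB_InP ht) (kB_InP (by simpa using ht)) (kB_inv t) (by simpa using kB_inv (-t))

lemma kC_pack {t : ℚ_[p]} (ht : ‖t‖ ≤ (p:ℝ)⁻¹) :
    kC p t ∈ KparaNormalizer p ∧ (kC p t)⁻¹ ∈ KparaNormalizer p ∧ kC p t ∈ GSp4 p :=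
  pack (GSp4_of_J one_ne_zero (kC_J t) (kC_inv t))
    (GSp4_of_J one_ne_zero (kC_J (-t)) (by simpa using kC_inv (-t)))
    (kC_InP ht) (kC_InP (by simpa using ht)) (kC_inv t) (by simpa using kC_inv (-t))

lemma kD_pack {t : ℚ_[p]} (ht : ‖t‖ ≤ 1) :
    kD p t ∈ KparaNormalizer p ∧ (kD p t)⁻¹ ∈ KparaNormalizer p ∧ kD p t ∈ GSp4 p :=
  pack (GSp4_of_J one_ne_zero (kD_J t) (kD_inv t))
    (GSp4_of_J one_ne_zero (kD_J (-t)) (by simpa using kD_inv (-t)))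
    (kD_InP ht) (kD_InP (by simpa using ht)) (kD_inv t) (by simpa using kD_inv (-t))

lemma rsw_pack :
    rsw p ∈ KparaNormalizer p ∧ (rsw p)⁻¹ ∈ KparaNormalizer p ∧ rsw p ∈ GSp4 p :=
  pack (GSp4_of_J one_ne_zero rsw_J rsw_inv) (GSp4_of_J one_ne_zero rsw'_J rsw_inv')
    rsw_InP rsw'_InP rsw_inv rsw_inv'

lemma s2_pack :
    s2 p ∈ KparaNormalizer p ∧ (s2 p)⁻¹ ∈ KparaNormalizer p ∧ s2 p ∈ GSp4 p :=
  pack (GSp4_of_J one_ne_zero s2_J s2_inv) (GSp4_of_J one_ne_zero s2'_J s2_inv')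
    s2_InP s2'_InP s2_inv s2_inv'


/-! ### u1 is in the normalizer -/

lemma u1_conj_entry (k : Matrix (Fin 4) (Fin 4) ℚ_[p]) : u1 p * k * u1' p =
    !![k 1 1, k 1 0 * ((p:ℚ_[p]))⁻¹, k 1 3 * ((p:ℚ_[p]))⁻¹, k 1 2;
       k 0 1 * (p:ℚ_[p]), k 0 0, k 0 3, k 0 2 * (p:ℚ_[p]);
       k 3 1 * (p:ℚ_[p]), k 3 0, k 3 3, k 3 2 * (p:ℚ_[p]);
       k 2 1, k 2 0 * ((p:ℚ_[p]))⁻¹, k 2 3 * ((p:ℚ_[p]))⁻¹, k 2 2] := by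
  ext i j
  fin_cases i <;> fin_cases j <;>
    simp [u1, u1', Matrix.mul_apply, Matrix.vecMul, dotProduct, Fin.sum_univ_four,
      vecHead, vecTail] <;>
    first
      | ring1
      | rw [mul_comm ((p:ℚ_[p])) (k _ _), mul_inv_cancel_right₀ pQ_ne]

lemma u1'_eq : u1' p = ((p:ℚ_[p]))⁻¹ • u1 p := by
  ext i j
  fin_cases i <;> fin_cases j <;>
    simp [u1, u1', Matrix.smul_apply, vecHead, vecTail]

lemma conj_swap (k : Matrix (Fin 4) (Fin 4) ℚ_[p]) : u1' p * k * u1 p = u1 p * k * u1' p := by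
  rw [u1'_eq, Matrix.smul_mul, Matrix.smul_mul, Matrix.mul_smul]

lemma u1_GSp4 : u1 p ∈ GSp4 p := GSp4_of_J pQ_ne u1_J u1_inv
lemma u1'_GSp4 : u1' p ∈ GSp4 p := GSp4_of_J (inv_ne_zero pQ_ne) u1'_J u1_inv'

lemma u1_conj_mem (k : Matrix (Fin 4) (Fin 4) ℚ_[p]) (hk : k ∈ Kpara p) :
    u1 p * k * u1' p ∈ Kpara p := by
  obtain ⟨hkG, h1, h2, h3, h4, h5, h6, h7, h8, h9, h10, h11, h12, h13, h14, h15, h16⟩ := hk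
  refine ⟨GSp4_mul (GSp4_mul u1_GSp4 hkG) u1'_GSp4,
    ?_, ?_, ?_, ?_, ?_, ?_, ?_, ?_, ?_, ?_, ?_, ?_, ?_, ?_, ?_, ?_⟩ <;>
    rw [u1_conj_entry k]
  exacts [by simpa using h6, by simpa using hD h5, by simpa using hE h8, by simpa using h7,
    by simpa using hA h2, by simpa using h1, by simpa using h4, by simpa using hC h3,
    by simpa using hA h14, by simpa using h13, by simpa using h16, by simpa using hA h15,
    by simpa using h10, by simpa using hD h9, by simpa using hD h12, by simpa using h11]

lemma u1_pack : u1 p ∈ KparaNormalizer p ∧ u1' p ∈ KparaNormalizer p := by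
  have hswap : ∀ k ∈ Kpara p, u1' p * k * u1 p ∈ Kpara p := fun k hk => by
    rw [conj_swap]; exact u1_conj_mem k hk
  exact ⟨norm_mem u1_GSp4 u1_inv u1_inv' u1_conj_mem hswap,
    norm_mem u1'_GSp4 u1_inv' u1_inv hswap u1_conj_mem⟩

/-! ### Discreteness of the p-adic norm -/

lemma pmul_le_of_lt {x y : ℚ_[p]} (h : ‖x‖ < ‖y‖) : (p:ℝ) * ‖x‖ ≤ ‖y‖ := by
  rcases eq_or_ne x 0 with rfl | hx
  · simpa using norm_nonneg y
  · have hy : y ≠ 0 := by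
      intro hy; rw [hy, norm_zero] at h; exact absurd h (not_lt.mpr (norm_nonneg x))
    rw [Padic.norm_eq_zpow_neg_valuation hx, Padic.norm_eq_zpow_neg_valuation hy] at *
    rw [show (p:ℝ) * (p:ℝ) ^ (-x.valuation) = (p:ℝ) ^ (1 - x.valuation) by
      rw [sub_eq_add_neg, zpow_add₀ (ne_of_gt pR_pos), zpow_one]]
    have hlt : -x.valuation < -y.valuation := by
      exact_mod_cast (zpow_lt_zpow_iff_right₀ pR_one_lt).mp h
    have : 1 - x.valuation ≤ -y.valuation := by omega
    exact (zpow_le_zpow_iff_right₀ pR_one_lt).mpr this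

lemma le_of_lt_pmul {x y : ℚ_[p]} (h : ‖x‖ < (p:ℝ) * ‖y‖) : ‖x‖ ≤ ‖y‖ := by
  rcases eq_or_ne x 0 with rfl | hx
  · simpa using norm_nonneg y
  · rcases eq_or_ne y 0 with rfl | hy
    · rw [norm_zero, mul_zero] at h
      exact absurd h (not_lt.mpr (norm_nonneg x))
    · rw [Padic.norm_eq_zpow_neg_valuation hx, Padic.norm_eq_zpow_neg_valuation hy] at *
      rw [show (p:ℝ) * (p:ℝ) ^ (-y.valuation) = (p:ℝ) ^ (1 - y.valuation) by
        rw [sub_eq_add_neg, zpow_add₀ (ne_of_gt pR_pos), zpow_one]] at h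
      have hlt : -x.valuation < 1 - y.valuation := by
        exact_mod_cast (zpow_lt_zpow_iff_right₀ pR_one_lt).mp h
      have : -x.valuation ≤ -y.valuation := by omega
      exact (zpow_le_zpow_iff_right₀ pR_one_lt).mpr this


/-! ### Phase 1: clearing row 2 -/

lemma inv_one_mat : (1 : Matrix (Fin 4) (Fin 4) ℚ_[p])⁻¹ = 1 :=
  Matrix.inv_eq_right_inv (by simp)

lemma A1 {g : Matrix (Fin 4) (Fin 4) ℚ_[p]}
    (h0 : ‖g 2 0‖ ≤ (p:ℝ)⁻¹ * ‖g 2 2‖) (h1 : ‖g 2 1‖ ≤ (p:ℝ)⁻¹ * ‖g 2 2‖)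
    (h3 : ‖g 2 3‖ ≤ (p:ℝ)⁻¹ * ‖g 2 2‖) :
    ∃ n, n ∈ KparaNormalizer p ∧ n⁻¹ ∈ KparaNormalizer p ∧
      (g * n) 2 0 = 0 ∧ (g * n) 2 1 = 0 ∧ (g * n) 2 3 = 0 := by
  by_cases hc : g 2 2 = 0
  · rw [hc, norm_zero, mul_zero, norm_le_zero_iff] at h0 h1 h3
    exact ⟨1, one_mem_N, by rw [inv_one_mat]; exact one_mem_N,
      by simpa using h0, by simpa using h1, by simpa using h3⟩
  · have hcn : 0 < ‖g 2 2‖ := norm_pos_iff.mpr hc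
    set t1 : ℚ_[p] := g 2 3 / g 2 2 with ht1def
    set t2 : ℚ_[p] := -(g 2 1) / g 2 2 with ht2def
    set a1 : ℚ_[p] := g 2 0 + g 2 1 * t1 with ha1def
    set t3 : ℚ_[p] := -a1 / g 2 2 with ht3def
    have ht1 : ‖t1‖ ≤ (p:ℝ)⁻¹ := by
      rw [ht1def, norm_div, div_le_iff₀ hcn]; exact h3
    have ht2 : ‖t2‖ ≤ (p:ℝ)⁻¹ := by
      rw [ht2def, norm_div, norm_neg, div_le_iff₀ hcn]; exact h1
    have hpinv1 : (p:ℝ)⁻¹ ≤ 1 := by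
      rw [inv_le_one_iff₀]; right; exact pR_one_lt.le
    have ha1 : ‖a1‖ ≤ (p:ℝ)⁻¹ * ‖g 2 2‖ := by
      refine le_trans (Padic.nonarchimedean _ _) (max_le h0 ?_)
      calc ‖g 2 1 * t1‖ ≤ ((p:ℝ)⁻¹ * ‖g 2 2‖) * (p:ℝ)⁻¹ := nmul_le h1 ht1
        _ ≤ ((p:ℝ)⁻¹ * ‖g 2 2‖) * 1 := by gcongr
        _ = (p:ℝ)⁻¹ * ‖g 2 2‖ := mul_one _
    have ht3 : ‖t3‖ ≤ (p:ℝ)⁻¹ := by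
      rw [ht3def, norm_div, norm_neg, div_le_iff₀ hcn]; exact ha1
    have pA := kA_pack (p := p) ht1
    have pB := kB_pack (p := p) ht2
    have pC := kC_pack (p := p) ht3
    refine ⟨kA p t1 * (kB p t2 * kC p t3),
      N_mul pA.1 (N_mul pB.1 pC.1), ?_, ?_, ?_, ?_⟩
    · rw [Matrix.mul_inv_rev, Matrix.mul_inv_rev]
      exact N_mul (N_mul pC.2.1 pB.2.1) pA.2.1
    · have hK : (g * (kA p t1 * (kB p t2 * kC p t3))) 2 0 =
          g 2 0 + g 2 1 * t1 + g 2 2 * (t3 - t1 * t2) + g 2 3 * t2 := by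
        simp [kA, kB, kC, Matrix.mul_apply, Matrix.vecMul, dotProduct,
          Fin.sum_univ_four, vecHead, vecTail]
        try ring1
        try (left; ring1)
      rw [hK, ht3def, ha1def, ht1def, ht2def]
      field_simp
      try ring1
      try (left; ring1)
      try simp
    · have hK : (g * (kA p t1 * (kB p t2 * kC p t3))) 2 1 = g 2 1 + g 2 2 * t2 := by
        simp [kA, kB, kC, Matrix.mul_apply, Matrix.vecMul, dotProduct,
          Fin.sum_univ_four, vecHead, vecTail]
        try ring1
        try (left; ring1)
      rw [hK, ht2def]
      field_simp
      try ring1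
      try (left; ring1)
      try simp
    · have hK : (g * (kA p t1 * (kB p t2 * kC p t3))) 2 3 = g 2 3 - g 2 2 * t1 := by
        simp [kA, kB, kC, Matrix.mul_apply, Matrix.vecMul, dotProduct,
          Fin.sum_univ_four, vecHead, vecTail]
        try ring1
        try (left; ring1)
      rw [hK, ht1def]
      field_simp
      try ring1
      try (left; ring1)
      try simp


lemma caseA {g : Matrix (Fin 4) (Fin 4) ℚ_[p]}
    (hA : max ‖g 2 1‖ ‖g 2 3‖ ≤ max ‖g 2 0‖ ((p:ℝ)⁻¹ * ‖g 2 2‖)) :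
    ∃ n, n ∈ KparaNormalizer p ∧ n⁻¹ ∈ KparaNormalizer p ∧
      (g * n) 2 0 = 0 ∧ (g * n) 2 1 = 0 ∧ (g * n) 2 3 = 0 := by
  by_cases hx : ‖g 2 0‖ ≤ (p:ℝ)⁻¹ * ‖g 2 2‖
  · have hm : max ‖g 2 0‖ ((p:ℝ)⁻¹ * ‖g 2 2‖) ≤ (p:ℝ)⁻¹ * ‖g 2 2‖ := max_le hx le_rfl
    exact A1 hx (((le_max_left _ _).trans hA).trans hm)
      (((le_max_right _ _).trans hA).trans hm)
  · push_neg at hx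
    have hca : ‖g 2 2‖ ≤ ‖g 2 0‖ := by
      apply le_of_lt_pmul
      have h := (mul_lt_mul_iff_right₀ (pR_pos (p := p))).mpr hx
      rwa [← mul_assoc, mul_inv_cancel₀ (ne_of_gt pR_pos), one_mul] at h
    have hmx : max ‖g 2 0‖ ((p:ℝ)⁻¹ * ‖g 2 2‖) = ‖g 2 0‖ := max_eq_left hx.le
    rw [hmx] at hA
    -- entries of g * rsw
    have e0 : (g * rsw p) 2 0 = g 2 2 * (-(p:ℚ_[p])) := by
      simp [rsw, Matrix.mul_apply, Fin.sum_univ_four, vecHead, vecTail]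
    have e1 : (g * rsw p) 2 1 = g 2 1 := by
      simp [rsw, Matrix.mul_apply, Fin.sum_univ_four, vecHead, vecTail]
    have e2 : (g * rsw p) 2 2 = g 2 0 * ((p:ℚ_[p]))⁻¹ := by
      simp [rsw, Matrix.mul_apply, Fin.sum_univ_four, vecHead, vecTail]
    have e3 : (g * rsw p) 2 3 = g 2 3 := by
      simp [rsw, Matrix.mul_apply, Fin.sum_univ_four, vecHead, vecTail]
    have hn0 : ‖(g * rsw p) 2 0‖ = (p:ℝ)⁻¹ * ‖g 2 2‖ := by
      rw [e0, norm_mul, norm_neg, Padic.norm_p, mul_comm]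
    have hn2 : (p:ℝ)⁻¹ * ‖(g * rsw p) 2 2‖ = ‖g 2 0‖ := by
      rw [e2, norm_mul, npinv, ← mul_assoc, mul_comm ((p:ℝ)⁻¹) _, mul_assoc,
        inv_mul_cancel₀ (ne_of_gt pR_pos), mul_one]
    have hpinv1 : (p:ℝ)⁻¹ ≤ 1 := by
      rw [inv_le_one_iff₀]; right; exact pR_one_lt.le
    have h0' : ‖(g * rsw p) 2 0‖ ≤ (p:ℝ)⁻¹ * ‖(g * rsw p) 2 2‖ := by
      rw [hn0, hn2]
      calc (p:ℝ)⁻¹ * ‖g 2 2‖ ≤ 1 * ‖g 2 2‖ := by gcongr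
        _ = ‖g 2 2‖ := one_mul _
        _ ≤ ‖g 2 0‖ := hca
    have h1' : ‖(g * rsw p) 2 1‖ ≤ (p:ℝ)⁻¹ * ‖(g * rsw p) 2 2‖ := by
      rw [e1, hn2]; exact (le_max_left _ _).trans hA
    have h3' : ‖(g * rsw p) 2 3‖ ≤ (p:ℝ)⁻¹ * ‖(g * rsw p) 2 2‖ := by
      rw [e3, hn2]; exact (le_max_right _ _).trans hA
    obtain ⟨n', hn', hn'i, z0, z1, z3⟩ := A1 h0' h1' h3'
    refine ⟨rsw p * n', N_mul rsw_pack.1 hn', ?_, ?_, ?_, ?_⟩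
    · rw [Matrix.mul_inv_rev]; exact N_mul hn'i rsw_pack.2.1
    · rw [← Matrix.mul_assoc]; exact z0
    · rw [← Matrix.mul_assoc]; exact z1
    · rw [← Matrix.mul_assoc]; exact z3

lemma row2_clear (g : Matrix (Fin 4) (Fin 4) ℚ_[p]) :
    ∃ n, n ∈ KparaNormalizer p ∧ n⁻¹ ∈ KparaNormalizer p ∧
      (g * n) 2 0 = 0 ∧ (g * n) 2 1 = 0 ∧ (g * n) 2 3 = 0 := by
  by_cases hAB : max ‖g 2 1‖ ‖g 2 3‖ ≤ max ‖g 2 0‖ ((p:ℝ)⁻¹ * ‖g 2 2‖)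
  · exact caseA hAB
  · push_neg at hAB
    -- entries of g * u1'
    have e0 : (g * u1' p) 2 0 = g 2 1 := by
      simp [u1', Matrix.mul_apply, Fin.sum_univ_four, vecHead, vecTail]
    have e1 : (g * u1' p) 2 1 = g 2 0 * ((p:ℚ_[p]))⁻¹ := by
      simp [u1', Matrix.mul_apply, Fin.sum_univ_four, vecHead, vecTail]
    have e2 : (g * u1' p) 2 2 = g 2 3 * ((p:ℚ_[p]))⁻¹ := by
      simp [u1', Matrix.mul_apply, Fin.sum_univ_four, vecHead, vecTail]
    have e3 : (g * u1' p) 2 3 = g 2 2 := by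
      simp [u1', Matrix.mul_apply, Fin.sum_univ_four, vecHead, vecTail]
    have h20 : ‖g 2 0‖ < max ‖g 2 1‖ ‖g 2 3‖ := lt_of_le_of_lt (le_max_left _ _) hAB
    have h22 : (p:ℝ)⁻¹ * ‖g 2 2‖ < max ‖g 2 1‖ ‖g 2 3‖ :=
      lt_of_le_of_lt (le_max_right _ _) hAB
    have key1 : (p:ℝ) * ‖g 2 0‖ ≤ max ‖g 2 1‖ ‖g 2 3‖ := by
      rcases le_total ‖g 2 1‖ ‖g 2 3‖ with h | h
      · rw [max_eq_right h] at h20 ⊢; exact pmul_le_of_lt h20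
      · rw [max_eq_left h] at h20 ⊢; exact pmul_le_of_lt h20
    have key2 : ‖g 2 2‖ ≤ max ‖g 2 1‖ ‖g 2 3‖ := by
      have h' : ‖g 2 2‖ < (p:ℝ) * max ‖g 2 1‖ ‖g 2 3‖ := by
        have h := (mul_lt_mul_iff_right₀ (pR_pos (p := p))).mpr h22
        rwa [← mul_assoc, mul_inv_cancel₀ (ne_of_gt pR_pos), one_mul] at h
      rcases le_total ‖g 2 1‖ ‖g 2 3‖ with h | h
      · rw [max_eq_right h] at h' ⊢; exact le_of_lt_pmul h'
      · rw [max_eq_left h] at h' ⊢; exact le_of_lt_pmul h'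
    have hA' : max ‖(g * u1' p) 2 1‖ ‖(g * u1' p) 2 3‖ ≤
        max ‖(g * u1' p) 2 0‖ ((p:ℝ)⁻¹ * ‖(g * u1' p) 2 2‖) := by
      have hn1 : ‖(g * u1' p) 2 1‖ = (p:ℝ) * ‖g 2 0‖ := by
        rw [e1, norm_mul, npinv, mul_comm]
      have hn2 : (p:ℝ)⁻¹ * ‖(g * u1' p) 2 2‖ = ‖g 2 3‖ := by
        rw [e2, norm_mul, npinv, ← mul_assoc, mul_comm ((p:ℝ)⁻¹) _, mul_assoc,
          inv_mul_cancel₀ (ne_of_gt pR_pos), mul_one]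
      rw [hn1, e3, e0, hn2]
      exact max_le key1 key2
    obtain ⟨n', hn', hn'i, z0, z1, z3⟩ := caseA hA'
    have hu1'inv : (u1' p)⁻¹ = u1 p := Matrix.inv_eq_right_inv u1_inv'
    refine ⟨u1' p * n', N_mul u1_pack.2 hn', ?_, ?_, ?_, ?_⟩
    · rw [Matrix.mul_inv_rev, hu1'inv]; exact N_mul hn'i u1_pack.1
    · rw [← Matrix.mul_assoc]; exact z0
    · rw [← Matrix.mul_assoc]; exact z1
    · rw [← Matrix.mul_assoc]; exact z3

/-! ### Phase 3 and the Borel membership -/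

lemma fin_borel {G : Matrix (Fin 4) (Fin 4) ℚ_[p]} (hG : G ∈ GSp4 p)
    (z0 : G 2 0 = 0) (z1 : G 2 1 = 0) (z3 : G 2 3 = 0) (z31 : G 3 1 = 0) :
    G ∈ BorelQp p := by
  obtain ⟨hd, μ, hμ, hJ⟩ := hG
  have hrow := symp_row hμ hJ
  have hc : G 2 2 ≠ 0 := by
    intro h
    apply hd
    apply Matrix.det_eq_zero_of_row_eq_zero 2
    intro j; fin_cases j <;> assumption
  have h10 : G 1 0 = 0 := by
    have h := congrFun (congrFun hrow 2) 1
    simp [Matrix.mul_apply, Fin.sum_univ_four, J4, z0, z1, z3, Matrix.smul_apply,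
      Matrix.transpose_apply, vecHead, vecTail] at h
    exact h.resolve_left hc
  have h30 : G 3 0 = 0 := by
    have h := congrFun (congrFun hrow 2) 3
    simp [Matrix.mul_apply, Fin.sum_univ_four, J4, z0, z1, z3, Matrix.smul_apply,
      Matrix.transpose_apply, vecHead, vecTail] at h
    exact h.resolve_left hc
  exact ⟨⟨hd, μ, hμ, hJ⟩, h10, z0, h30, z1, z31, z3⟩

lemma phase3 {G : Matrix (Fin 4) (Fin 4) ℚ_[p]} (hG : G ∈ GSp4 p)
    (z0 : G 2 0 = 0) (z1 : G 2 1 = 0) (z3 : G 2 3 = 0) :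
    ∃ n, n ∈ KparaNormalizer p ∧ n⁻¹ ∈ KparaNormalizer p ∧ (G * n) ∈ BorelQp p := by
  by_cases hz : G 3 1 = 0
  · exact ⟨1, one_mem_N, by rw [inv_one_mat]; exact one_mem_N,
      by rw [Matrix.mul_one]; exact fin_borel hG z0 z1 z3 hz⟩
  · by_cases hzw : ‖G 3 1‖ ≤ ‖G 3 3‖
    · have hw : G 3 3 ≠ 0 := by
        intro h; rw [h, norm_zero] at hzw; exact hz (norm_le_zero_iff.mp hzw)
      set t : ℚ_[p] := -(G 3 1) / G 3 3 with htdef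
      have ht : ‖t‖ ≤ 1 := by
        rw [htdef, norm_div, norm_neg, div_le_one (norm_pos_iff.mpr hw)]; exact hzw
      have pD := kD_pack (p := p) ht
      refine ⟨kD p t, pD.1, pD.2.1, ?_⟩
      have f0 : (G * kD p t) 2 0 = G 2 0 := by
        simp [kD, Matrix.mul_apply, Fin.sum_univ_four, vecHead, vecTail]
      have f1 : (G * kD p t) 2 1 = G 2 1 + G 2 3 * t := by
        simp [kD, Matrix.mul_apply, Fin.sum_univ_four, vecHead, vecTail]
      have f3 : (G * kD p t) 2 3 = G 2 3 := by
        simp [kD, Matrix.mul_apply, Fin.sum_univ_four, vecHead, vecTail]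
      have f31 : (G * kD p t) 3 1 = G 3 1 + G 3 3 * t := by
        simp [kD, Matrix.mul_apply, Fin.sum_univ_four, vecHead, vecTail]
      apply fin_borel (GSp4_mul hG pD.2.2)
      · rw [f0]; exact z0
      · rw [f1, z1, z3]; ring
      · rw [f3]; exact z3
      · rw [f31, htdef]; field_simp; try ring1
    · push_neg at hzw
      have hz' : G 3 1 ≠ 0 := hz
      set t : ℚ_[p] := G 3 3 / G 3 1 with htdef
      have ht : ‖t‖ ≤ 1 := by
        rw [htdef, norm_div, div_le_one (norm_pos_iff.mpr hz')]; exact hzw.le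
      have pD := kD_pack (p := p) ht
      refine ⟨s2 p * kD p t, N_mul s2_pack.1 pD.1, ?_, ?_⟩
      · rw [Matrix.mul_inv_rev]; exact N_mul pD.2.1 s2_pack.2.1
      · have f0 : (G * (s2 p * kD p t)) 2 0 = G 2 0 := by
          simp [s2, kD, Matrix.mul_apply, Matrix.vecMul, dotProduct,
            Fin.sum_univ_four, vecHead, vecTail]
        have f1 : (G * (s2 p * kD p t)) 2 1 = -(G 2 3) + G 2 1 * t := by
          simp [s2, kD, Matrix.mul_apply, Matrix.vecMul, dotProduct,
            Fin.sum_univ_four, vecHead, vecTail]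
          try ring1
        have f3 : (G * (s2 p * kD p t)) 2 3 = G 2 1 := by
          simp [s2, kD, Matrix.mul_apply, Matrix.vecMul, dotProduct,
            Fin.sum_univ_four, vecHead, vecTail]
        have f31 : (G * (s2 p * kD p t)) 3 1 = -(G 3 3) + G 3 1 * t := by
          simp [s2, kD, Matrix.mul_apply, Matrix.vecMul, dotProduct,
            Fin.sum_univ_four, vecHead, vecTail]
          try ring1
        apply fin_borel (GSp4_mul hG (GSp4_mul (s2_pack (p := p)).2.2 pD.2.2))
        · rw [f0]; exact z0
        · rw [f1, z1, z3]; ring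
        · rw [f3]; exact z1
        · rw [f31, htdef]; field_simp; try ring1; try ring1

end Stmt3

/-- `GSp₄(ℚ_p) = B(ℚ_p) · 𝒩(𝒦_p)`:  every `g ∈ GSp₄(ℚ_p)` factors as
`g = b·n` with `b` in the Borel subgroup and `n` in the normalizer of the first
paramodular subgroup. -/
theorem stmt_3 (p : ℕ) [Fact p.Prime] (g : Matrix (Fin 4) (Fin 4) ℚ_[p])
    (hg : g ∈ GSp4 p) :
    ∃ b ∈ BorelQp p, ∃ n ∈ KparaNormalizer p, g = b * n := by

  obtain ⟨n1, hn1, hn1i, z0, z1, z3⟩ := Stmt3.row2_clear g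
  have hgn1 : g * n1 ∈ GSp4 p := Stmt3.GSp4_mul hg hn1.1
  obtain ⟨n2, hn2, hn2i, hB⟩ := Stmt3.phase3 hgn1 z0 z1 z3
  refine ⟨g * n1 * n2, hB, n2⁻¹ * n1⁻¹, Stmt3.N_mul hn2i hn1i, ?_⟩
  have h2 : IsUnit n2.det := isUnit_iff_ne_zero.mpr hn2.1.1
  have h1 : IsUnit n1.det := isUnit_iff_ne_zero.mpr hn1.1.1
  have e2 : n2 * (n2⁻¹ * n1⁻¹) = n1⁻¹ := by
    rw [← Matrix.mul_assoc, Matrix.mul_nonsing_inv _ h2, Matrix.one_mul]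
  rw [Matrix.mul_assoc (g * n1) n2 _, e2, Matrix.mul_nonsing_inv_cancel_right _ _ h1]
end

section
/- Let p be a prime, θ as below, and m ≥ 1 an integer. Let (R, μ) be a σ-finite measure space, f : R → ℂ an integrable function, and g₁, …, g_m : R → ℚ_p measurable functions. Suppose there is a measurable action of the group (ℤ_p^×)^m on R such that: (a) the complex measure f·dμ is invariant under the action, i.e. for every λ ∈ (ℤ_p^×)^m and every bounded measurable h : R → ℂ one has ∫_R h(λ·r)·f(r) dμ(r) = ∫_R h(r)·f(r) dμ(r); and (b) g_j(λ·r) = λ_j·g_j(r) for all λ = (λ₁,…,λ_m) ∈ (ℤ_p^×)^m, all r ∈ R and all 1 ≤ j ≤ m. Then ∫_R f(r)·θ(g₁(r) + ⋯ + g_m(r)) dμ(r) = ∫_{R'} f(r)·θ(g₁(r) + ⋯ + g_m(r)) dμ(r), where R' = { r ∈ R : |g_j(r)| ≤ p for all 1 ≤ j ≤ m }. -/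
open MeasureTheory

section Aux
variable {p : ℕ} [Fact p.Prime] {θ : ℚ_[p] → ℂ}

lemma theta_nat_mul (hθ_add : ∀ a b : ℚ_[p], θ (a + b) = θ a * θ b)
    (hθ_triv : ∀ a : ℚ_[p], ‖a‖ ≤ 1 → θ a = 1)
    (c : ℕ) (x : ℚ_[p]) : θ ((c : ℚ_[p]) * x) = θ x ^ c := by
  induction c with
  | zero => simpa using hθ_triv 0 (by simp)
  | succ n ih =>
    push_cast
    rw [add_mul, one_mul, hθ_add, ih, pow_succ]

lemma theta_int_mul (hθ_add : ∀ a b : ℚ_[p], θ (a + b) = θ a * θ b)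
    (hθ_triv : ∀ a : ℚ_[p], ‖a‖ ≤ 1 → θ a = 1)
    {x : ℚ_[p]} (hx : ‖x‖ ≤ (p : ℝ)) (hx1 : θ x = 1)
    {w : ℚ_[p]} (hw : ‖w‖ ≤ 1) : θ (w * x) = 1 := by
  have hp1 : (1:ℝ) < p := by exact_mod_cast (Fact.out : p.Prime).one_lt
  have hp0 : (0:ℝ) < p := lt_trans one_pos hp1
  set z : ℤ_[p] := ⟨w, hw⟩ with hz
  set c : ℕ := z.appr 1 with hc
  have hmem := z.appr_spec 1
  have hnorm : ‖z - (c : ℤ_[p])‖ ≤ (p : ℝ)⁻¹ := by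
    have h2 := ((z - (c : ℤ_[p])).norm_le_pow_iff_mem_span_pow 1).mpr hmem
    simpa using h2
  have hsplit : w * x = (c : ℚ_[p]) * x + (w - (c : ℚ_[p])) * x := by ring
  have hwc : ‖w - (c : ℚ_[p])‖ ≤ (p : ℝ)⁻¹ := by
    have : ((z - (c : ℤ_[p]) : ℤ_[p]) : ℚ_[p]) = w - (c : ℚ_[p]) := by
      push_cast [hz]
      rfl
    rw [← this, PadicInt.padic_norm_e_of_padicInt]
    exact hnorm
  have hsmall : ‖(w - (c : ℚ_[p])) * x‖ ≤ 1 := by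
    rw [norm_mul]
    calc ‖w - (c : ℚ_[p])‖ * ‖x‖ ≤ (p : ℝ)⁻¹ * (p : ℝ) :=
          mul_le_mul hwc hx (norm_nonneg _) (by positivity)
      _ = 1 := inv_mul_cancel₀ (ne_of_gt hp0)
  rw [hsplit, hθ_add, theta_nat_mul hθ_add hθ_triv, hx1, one_pow, hθ_triv _ hsmall, one_mul]

lemma theta_ne_one (hθ_add : ∀ a b : ℚ_[p], θ (a + b) = θ a * θ b)
    (hθ_triv : ∀ a : ℚ_[p], ‖a‖ ≤ 1 → θ a = 1)
    (hθ_nontriv : ∃ a : ℚ_[p], ‖a‖ ≤ (p : ℝ) ∧ θ a ≠ 1)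
    {x : ℚ_[p]} (hx : ‖x‖ = (p : ℝ)) : θ x ≠ 1 := by
  have hp1 : (1:ℝ) < p := by exact_mod_cast (Fact.out : p.Prime).one_lt
  have hp0 : (0:ℝ) < p := lt_trans one_pos hp1
  intro h1
  obtain ⟨a, ha, hane⟩ := hθ_nontriv
  have hx0 : x ≠ 0 := by
    intro h; rw [h, norm_zero] at hx; exact absurd hx.symm (ne_of_gt hp0)
  have hw : ‖a / x‖ ≤ 1 := by
    rw [norm_div, hx, div_le_one hp0]; exact ha
  have := theta_int_mul hθ_add hθ_triv (le_of_eq hx) h1 hw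
  rw [div_mul_cancel₀ _ hx0] at this
  exact hane this

end Aux

/-- Let `p` be a prime, `θ : ℚ_p → ℂ` a continuous unitary additive
character trivial on `ℤ_p` and nontrivial on `p⁻¹ℤ_p`, and `m ≥ 1`.  Let `(R, μ)` be a
σ-finite measure space, `f : R → ℂ` integrable, `g₁, …, g_m : R → ℚ_p` measurable.
Suppose `(ℤ_p^×)^m` acts measurably on `R`, leaving `f·dμ` invariant, and
`g_j(λ·r) = λ_j · g_j(r)`.  Then
`∫_R f·θ(∑ g_j) dμ = ∫_{R'} f·θ(∑ g_j) dμ` where `R' = {r : |g_j(r)| ≤ p ∀ j}`. -/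
theorem stmt_4 (p : ℕ) [Fact p.Prime]
    [MeasurableSpace ℚ_[p]] [BorelSpace ℚ_[p]]
    (θ : ℚ_[p] → ℂ) (hθ_cont : Continuous θ)
    (hθ_add : ∀ a b : ℚ_[p], θ (a + b) = θ a * θ b)
    (hθ_unit : ∀ a : ℚ_[p], ‖θ a‖ = 1)
    (hθ_triv : ∀ a : ℚ_[p], ‖a‖ ≤ 1 → θ a = 1)
    (hθ_nontriv : ∃ a : ℚ_[p], ‖a‖ ≤ (p : ℝ) ∧ θ a ≠ 1)
    (m : ℕ) (hm : 1 ≤ m)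
    {R : Type*} [MeasurableSpace R] (μ : Measure R) [SigmaFinite μ]
    (f : R → ℂ) (hf : Integrable f μ)
    (g : Fin m → R → ℚ_[p]) (hg : ∀ j, Measurable (g j))
    (act : (Fin m → ℤ_[p]ˣ) → R → R)
    (act_one : ∀ r, act 1 r = r)
    (act_mul : ∀ lam lam' r, act (lam * lam') r = act lam (act lam' r))
    (act_meas : ∀ lam, Measurable (act lam))
    (h_inv : ∀ (lam : Fin m → ℤ_[p]ˣ) (h : R → ℂ), Measurable h → (∃ C : ℝ, ∀ r, ‖h r‖ ≤ C) →
      ∫ r, h (act lam r) * f r ∂μ = ∫ r, h r * f r ∂μ)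
    (h_equiv : ∀ (lam : Fin m → ℤ_[p]ˣ) (r : R) (j : Fin m),
      g j (act lam r) = ((lam j : ℤ_[p]) : ℚ_[p]) * g j r) :
    ∫ r, f r * θ (∑ j, g j r) ∂μ =
      ∫ r in {r : R | ∀ j, ‖g j r‖ ≤ (p : ℝ)}, f r * θ (∑ j, g j r) ∂μ := by
  classical
  have hp1 : (1:ℝ) < p := by exact_mod_cast (Fact.out : p.Prime).one_lt
  have hp0 : (0:ℝ) < p := lt_trans one_pos hp1
  have hgsum : Measurable fun r => ∑ j, g j r := Finset.measurable_sum _ fun j _ => hg j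
  have hθsum : Measurable fun r => θ (∑ j, g j r) := hθ_cont.measurable.comp hgsum
  set F : R → ℂ := fun r => f r * θ (∑ j, g j r) with hFdef
  have hFint : Integrable F μ := by
    have h1 := hf.bdd_mul hθsum.aestronglyMeasurable (Filter.Eventually.of_forall fun r => le_of_eq (hθ_unit _))
    have h2 : F = fun r => θ (∑ j, g j r) * f r := by funext r; simp [hFdef]; ring
    rw [h2]; exact h1
  have hnorm_act : ∀ lam (r : R) i, ‖g i (act lam r)‖ = ‖g i r‖ := by
    intro lam r i
    rw [h_equiv, norm_mul, PadicInt.padic_norm_e_of_padicInt, PadicInt.norm_units, one_mul]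
  set S : Set R := {r : R | ∀ j, ‖g j r‖ ≤ (p:ℝ)} with hSdef
  have hSmeas : MeasurableSet S := by
    have hS2 : S = ⋂ j, {r | ‖g j r‖ ≤ (p:ℝ)} := by ext r; simp [hSdef]
    rw [hS2]
    exact MeasurableSet.iInter fun j => measurableSet_le (hg j).norm measurable_const
  set A : Fin m × ℕ → Set R := fun q =>
    {r | (∀ i, i < q.1 → ‖g i r‖ ≤ (p:ℝ)) ∧ ‖g q.1 r‖ = (p:ℝ) ^ (q.2 + 2)} with hAdef
  have hAmeas : ∀ q, MeasurableSet (A q) := by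
    intro q
    have h3 : A q = (⋂ i, ⋂ (_ : i < q.1), {r | ‖g i r‖ ≤ (p:ℝ)})
        ∩ {r | ‖g q.1 r‖ = (p:ℝ) ^ (q.2 + 2)} := by
      ext r; simp [hAdef]
    rw [h3]
    exact (MeasurableSet.iInter fun i => MeasurableSet.iInter fun _ =>
      measurableSet_le (hg i).norm measurable_const).inter
      ((hg q.1).norm (measurableSet_singleton _))
  have hA_mem : ∀ q lam (r : R), act lam r ∈ A q ↔ r ∈ A q := by
    intro q lam r
    simp only [hAdef, Set.mem_setOf_eq, hnorm_act]
  have hInd : ∀ q lam (r : R), (A q).indicator (fun _ => (1:ℂ)) (act lam r)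
      = (A q).indicator (fun _ => (1:ℂ)) r := by
    intro q lam r
    simp only [Set.indicator_apply]
    exact if_congr (hA_mem q lam r) rfl rfl
  have key : ∀ q : Fin m × ℕ, ∫ r in A q, F r ∂μ = 0 := by
    rintro ⟨j, k⟩
    set K : ℕ := k + 1 with hK
    have hpowlt : ((p:ℝ) ^ K)⁻¹ < 1 := by
      rw [inv_lt_one_iff₀]
      right
      exact one_lt_pow₀ hp1 (by omega)
    have hunorm : ∀ c : ℕ, ‖(-((c:ℤ_[p]) * (p:ℤ_[p])^K) : ℤ_[p])‖ < 1 := by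
      intro c
      rw [norm_neg]
      calc ‖(c:ℤ_[p]) * (p:ℤ_[p])^K‖ ≤ ‖(c:ℤ_[p])‖ * ‖(p:ℤ_[p])^K‖ := norm_mul_le _ _
        _ ≤ 1 * ((p:ℝ)^K)⁻¹ := by
            apply mul_le_mul (PadicInt.norm_le_one _) _ (norm_nonneg _) zero_le_one
            rw [PadicInt.norm_p_pow]
            rw [zpow_neg, zpow_natCast]
        _ = ((p:ℝ)^K)⁻¹ := one_mul _
        _ < 1 := hpowlt
    set u : ℕ → ℤ_[p]ˣ := fun c => Units.oneSub _ (hunorm c) with hu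
    set lam : ℕ → (Fin m → ℤ_[p]ˣ) := fun c => Function.update (1 : Fin m → ℤ_[p]ˣ) j (u c)
      with hlam
    have hlam_val : ∀ c (i : Fin m), ((lam c i : ℤ_[p]) : ℚ_[p])
        = if i = j then 1 + (c:ℚ_[p]) * (p:ℚ_[p])^K else 1 := by
      intro c i
      by_cases hij : i = j
      · subst hij
        simp only [hlam, Function.update_self, if_pos rfl, hu, Units.val_oneSub]
        push_cast
        ring
      · simp [hlam, Function.update_of_ne hij, hij]
    set h : R → ℂ := fun r => θ (∑ i, g i r) * (A (j,k)).indicator (fun _ => (1:ℂ)) r with hh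
    have hhmeas : Measurable h := hθsum.mul (measurable_const.indicator (hAmeas (j,k)))
    have hhbdd1 : ∀ r, ‖h r‖ ≤ 1 := by
      intro r
      rw [hh]
      simp only [norm_mul, hθ_unit, one_mul]
      by_cases hr : r ∈ A (j,k) <;> simp [Set.indicator_apply, hr]
    set x : R → ℚ_[p] := fun r => (p:ℚ_[p])^K * g j r with hx
    have hsum : ∀ c (r : R), ∑ i, ((lam c i : ℤ_[p]) : ℚ_[p]) * g i r
        = (c:ℚ_[p]) * x r + ∑ i, g i r := by
      intro c r
      have h1 : ∀ i : Fin m, ((lam c i : ℤ_[p]) : ℚ_[p]) * g i r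
          = (if i = j then (c:ℚ_[p]) * x r else 0) + g i r := by
        intro i
        rw [hlam_val]
        by_cases hij : i = j
        · subst hij
          rw [if_pos rfl, if_pos rfl]
          simp only [hx]
          ring
        · rw [if_neg hij, if_neg hij]
          ring
      rw [Finset.sum_congr rfl fun i _ => h1 i, Finset.sum_add_distrib]
      congr 1
      simp
    have hact : ∀ c (r : R), h (act (lam c) r) = θ ((c:ℚ_[p]) * x r) * h r := by
      intro c r
      simp only [hh]
      rw [show (∑ i, g i (act (lam c) r)) = ∑ i, ((lam c i : ℤ_[p]) : ℚ_[p]) * g i r from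
          Finset.sum_congr rfl fun i _ => h_equiv _ _ _,
        hsum, hθ_add, hInd (j,k) (lam c) r]
      ring
    have hint_c : ∀ c : ℕ, Integrable (fun r => h (act (lam c) r) * f r) μ := fun c =>
      hf.bdd_mul ((hhmeas.comp (act_meas _)).aestronglyMeasurable)
        (Filter.Eventually.of_forall fun r => hhbdd1 _)
    have heq : ∀ c : ℕ, ∫ r, h (act (lam c) r) * f r ∂μ = ∫ r, h r * f r ∂μ := fun c =>
      h_inv (lam c) h hhmeas ⟨1, hhbdd1⟩
    have hptzero : ∀ r, ∑ c ∈ Finset.range p, h (act (lam c) r) * f r = 0 := by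
      intro r
      by_cases hrA : r ∈ A (j,k)
      · have hxnorm : ‖x r‖ = (p:ℝ) := by
          have hgj : ‖g j r‖ = (p:ℝ)^(k+2) := hrA.2
          rw [hx]
          simp only []
          rw [norm_mul, Padic.norm_p_pow, hgj, ← zpow_natCast (p:ℝ) (k+2),
            ← zpow_add₀ (ne_of_gt hp0)]
          rw [show (-(K:ℤ)) + ((k:ℕ)+2 : ℕ) = 1 by push_cast [hK]; omega, zpow_one]
        have hz1 : θ (x r) ≠ 1 := theta_ne_one hθ_add hθ_triv hθ_nontriv hxnorm
        have hzp : θ (x r) ^ p = 1 := by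
          rw [← theta_nat_mul hθ_add hθ_triv]
          apply hθ_triv
          rw [norm_mul, Padic.norm_p, hxnorm, inv_mul_cancel₀ (ne_of_gt hp0)]
        have hgeom : ∑ c ∈ Finset.range p, θ (x r) ^ c = 0 := by
          rw [geom_sum_eq hz1, hzp, sub_self, zero_div]
        calc ∑ c ∈ Finset.range p, h (act (lam c) r) * f r
            = ∑ c ∈ Finset.range p, θ (x r) ^ c * (h r * f r) := by
              refine Finset.sum_congr rfl fun c _ => ?_
              rw [hact, theta_nat_mul hθ_add hθ_triv]; ring
          _ = (∑ c ∈ Finset.range p, θ (x r) ^ c) * (h r * f r) := by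
              rw [Finset.sum_mul]
          _ = 0 := by rw [hgeom, zero_mul]
      · refine Finset.sum_eq_zero fun c _ => ?_
        rw [hact]
        simp [hh, Set.indicator_of_notMem hrA]
    have hsum_int : ∑ c ∈ Finset.range p, ∫ r, h (act (lam c) r) * f r ∂μ = 0 := by
      rw [← integral_finset_sum _ fun c _ => hint_c c]
      simp only [hptzero, integral_zero]
    have hpz : (p : ℂ) * ∫ r, h r * f r ∂μ = 0 := by
      rw [Finset.sum_congr rfl fun c _ => heq c, Finset.sum_const, Finset.card_range,
        nsmul_eq_mul] at hsum_int
      exact hsum_int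
    have hpne : (p:ℂ) ≠ 0 := by exact_mod_cast (Fact.out : p.Prime).ne_zero
    have hInt0 : ∫ r, h r * f r ∂μ = 0 := (mul_eq_zero.mp hpz).resolve_left hpne
    have hindF : (A (j,k)).indicator F = fun r => h r * f r := by
      funext r
      by_cases hrA : r ∈ A (j,k)
      · simp only [Set.indicator_of_mem hrA, hh, Set.indicator_of_mem hrA, hFdef]; ring
      · simp [Set.indicator_of_notMem hrA, hh]
    rw [← integral_indicator (hAmeas (j,k)), hindF]
    exact hInt0
  have hcover : Sᶜ = ⋃ q, A q := by
    ext r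
    simp only [Set.mem_compl_iff, hSdef, Set.mem_setOf_eq, Set.mem_iUnion, not_forall, hAdef]
    constructor
    · rintro ⟨j0, hj0⟩
      set s : Finset (Fin m) := Finset.univ.filter (fun i => ¬ ‖g i r‖ ≤ (p:ℝ)) with hs
      have hsne : s.Nonempty := ⟨j0, by simp only [hs, Finset.mem_filter, Finset.mem_univ, true_and]; exact hj0⟩
      set j := s.min' hsne with hj
      have hjmem : j ∈ s := s.min'_mem hsne
      have hjgt : (p:ℝ) < ‖g j r‖ := by
        have := (Finset.mem_filter.mp hjmem).2
        exact not_le.mp this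
      have hbelow : ∀ i, i < j → ‖g i r‖ ≤ (p:ℝ) := by
        intro i hij
        by_contra hcon
        have : i ∈ s := by simp only [hs, Finset.mem_filter, Finset.mem_univ, true_and]; exact hcon
        exact absurd (s.min'_le i this) (not_le.mpr hij)
      have hx0 : g j r ≠ 0 := by
        intro hcon
        rw [hcon, norm_zero] at hjgt
        exact absurd hjgt (not_lt.mpr (le_of_lt hp0))
      have hval := Padic.norm_eq_zpow_neg_valuation hx0
      have h2le : 2 ≤ -(g j r).valuation := by
        by_contra hcon
        push_neg at hcon
        have : ‖g j r‖ ≤ (p:ℝ) := by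
          rw [hval]
          calc (p:ℝ) ^ (-(g j r).valuation) ≤ (p:ℝ) ^ (1:ℤ) :=
                zpow_le_zpow_right₀ (le_of_lt hp1) (by omega)
            _ = (p:ℝ) := zpow_one _
        exact absurd this (not_le.mpr hjgt)
      refine ⟨(j, (-(g j r).valuation - 2).toNat), hbelow, ?_⟩
      rw [hval, ← zpow_natCast (p:ℝ)]
      congr 1
      have h4 : ((-(g j r).valuation - 2).toNat : ℤ) = -(g j r).valuation - 2 :=
        Int.toNat_of_nonneg (by omega)
      push_cast
      omega
    · rintro ⟨q, hq1, hq2⟩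
      refine ⟨q.1, ?_⟩
      rw [hq2]
      apply not_le.mpr
      calc (p:ℝ) = (p:ℝ)^1 := (pow_one _).symm
        _ < (p:ℝ)^(q.2+2) := pow_lt_pow_right₀ hp1 (by omega)
  have hdisj : Pairwise (Function.onFun Disjoint A) := by
    have hlt : ∀ q : Fin m × ℕ, (p:ℝ) < (p:ℝ)^(q.2+2) := by
      intro q
      calc (p:ℝ) = (p:ℝ)^1 := (pow_one _).symm
        _ < (p:ℝ)^(q.2+2) := pow_lt_pow_right₀ hp1 (by omega)
    rintro ⟨j1,k1⟩ ⟨j2,k2⟩ hne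
    rw [Function.onFun, Set.disjoint_left]
    rintro r ⟨h1a, h1b⟩ ⟨h2a, h2b⟩
    rcases lt_trichotomy j1 j2 with hlt12|heq12|hlt21
    · have := h2a j1 hlt12
      rw [h1b] at this
      exact absurd this (not_le.mpr (hlt (j1,k1)))
    · apply hne
      have hk : k1 = k2 := by
        rw [heq12, h2b] at h1b
        have hmono : StrictMono fun n : ℕ => (p:ℝ)^n := fun a b hab =>
          pow_lt_pow_right₀ hp1 hab
        have := hmono.injective h1b
        omega
      rw [Prod.mk.injEq]
      exact ⟨heq12, hk⟩
    · have := h1a j2 hlt21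
      rw [h2b] at this
      exact absurd this (not_le.mpr (hlt (j2,k2)))
  have hScompl : ∫ r in Sᶜ, F r ∂μ = 0 := by
    rw [hcover, integral_iUnion hAmeas hdisj hFint.integrableOn]
    simp only [key, tsum_zero]
  rw [← integral_add_compl hSmeas hFint, hScompl, add_zero]
end
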